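/- arXiv:2512.16414 — 7 statements merged into one kernel-verified Lean document; each statement's English description precedes it below -/
import Mathlib

section
/- For every preference profile P with margin graph M(P) and every descending linear ordering o ∈ O↓ of the edges of M(P), the River diagram M^RV(o) is a rooted tree, and its unique root is the unique River winner RV(o,P). -/
attribute [local instance] Classical.propDecidable

/-- A preference profile: each of `m` voters has a strict linear (total) preference
relation over the alternatives `A`. -/
structure Profile (A : Type*) (m : ℕ) where
  pref : Fin m → A → A → Prop
  strict : ∀ i, IsStrictTotalOrder A (pref i)

/-- The majority margin of `x` over `y`: the number of voters preferring `x` to `y`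
minus the number of voters preferring `y` to `x`. -/
noncomputable def margin {A : Type*} [Fintype A] {m : ℕ} (P : Profile A m) (x y : A) : ℤ :=
  ((Finset.univ.filter fun i => P.pref i x y).card : ℤ) -
    ((Finset.univ.filter fun i => P.pref i y x).card : ℤ)

/-- The majority margin as a function on (potential) edges. -/
noncomputable def marginE {A : Type*} [Fintype A] {m : ℕ} (P : Profile A m) : A × A → ℤ :=
  fun e => margin P e.1 e.2

/-- The edge set of the margin graph: an edge `(x, y)` between distinct alternatives
whenever the majority margin of `x` over `y` is nonnegative. -/
noncomputable def marginEdges {A : Type*} [Fintype A] {m : ℕ} (P : Profile A m) :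
    Finset (A × A) :=
  Finset.univ.filter fun e => e.1 ≠ e.2 ∧ 0 ≤ margin P e.1 e.2

/-- `l` is a path from `x` to `y` in the digraph with edge set `E`:
a nonempty list of pairwise distinct vertices starting at `x`, ending at `y`,
whose consecutive vertices are joined by edges of `E`. -/
def IsPathFrom {V : Type*} (E : Finset (V × V)) (l : List V) (x y : V) : Prop :=
  l ≠ [] ∧ l.Nodup ∧ l.head? = some x ∧ l.getLast? = some y ∧
    l.Chain' fun a b => (a, b) ∈ E

/-- There is a path from `x` to `y` in the digraph with edge set `E`. -/
def Reach {V : Type*} (E : Finset (V × V)) (x y : V) : Prop :=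
  ∃ l, IsPathFrom E l x y

/-- The digraph with edge set `E` contains a directed cycle. -/
def HasCycle {V : Type*} (E : Finset (V × V)) : Prop :=
  ∃ f ∈ E, Reach E f.2 f.1

/-- `T` is a tree rooted at `r`: there is a unique path from `r` to every vertex,
no edge enters the root, and every vertex has at most one incoming edge. -/
def IsRootedTree {V : Type*} (T : Finset (V × V)) (r : V) : Prop :=
  (∀ v : V, ∃! l : List V, IsPathFrom T l r v) ∧ (∀ e ∈ T, e.2 ≠ r) ∧
    ∀ e f, e ∈ T → f ∈ T → e.2 = f.2 → e = f

/-- `a` has no incoming edge in `D`. -/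
def noIncoming {V : Type*} (D : Finset (V × V)) (a : V) : Prop :=
  ∀ e ∈ D, e.2 ≠ a

/-- `o` is a descending linear ordering of the edge set `E` with respect to the
margin function `marg`: an enumeration of `E` without repetition in which edges of
larger margin come before edges of smaller margin. -/
def IsDescOrdering {V : Type*} (marg : V × V → ℤ) (E : Finset (V × V))
    (o : List (V × V)) : Prop :=
  o.Nodup ∧ (∀ e, e ∈ o ↔ e ∈ E) ∧ o.Pairwise fun e f => marg f ≤ marg e

/-- One step of the River procedure: add `e = (x, y)` to the current diagram `D` unless
(R1) `y` already has an incoming edge in `D`, or (R2) there is a path from `y` to `x`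
in `D`. -/
noncomputable def riverStep {V : Type*} (D : Finset (V × V)) (e : V × V) :
    Finset (V × V) :=
  if (∃ f ∈ D, f.2 = e.2) ∨ Reach D e.2 e.1 then D else insert e D

/-- The River diagram obtained by processing the edges in the order `o`,
starting from the empty diagram. -/
noncomputable def riverFold {V : Type*} (o : List (V × V)) : Finset (V × V) :=
  o.foldl riverStep ∅

/-- One step of the semi-River process with margin function `marg`: add `e = (x, y)` to
the current diagram `D` unless
(sR1) there is another incoming edge `e' = (z, y)` of `y` among the included edges of
margin strictly greater than `marg e` such that there is no path from `y` to `z` among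
the included edges of margin at least `marg e'`, or
(sR2) within the included edges of strictly greater margin, the set of vertices having
a path to `x` avoiding all incoming edges of `y` induces an acyclic subgraph in which
`y` is the only vertex with no incoming edge. -/
noncomputable def semiRiverStep {V : Type*} (marg : V × V → ℤ) (D : Finset (V × V))
    (e : V × V) : Finset (V × V) :=
  let Sgt := D.filter fun f => marg e < marg f
  let sR1 : Prop := ∃ f ∈ Sgt, f.2 = e.2 ∧
      ¬ Reach (D.filter fun g => marg f ≤ marg g) e.2 f.1
  let Anc : Set V := {v | Reach (Sgt.filter fun g => g.2 ≠ e.2) v e.1}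
  let ind := Sgt.filter fun g => g.1 ∈ Anc ∧ g.2 ∈ Anc
  let sR2 : Prop := e.2 ∈ Anc ∧ ¬ HasCycle ind ∧
      ∀ v ∈ Anc, ((∀ g ∈ ind, g.2 ≠ v) ↔ v = e.2)
  if sR1 ∨ sR2 then D else insert e D

/-- The semi-River diagram obtained by processing the edges in the order `o`,
starting from the empty diagram. -/
noncomputable def semiRiverFold {V : Type*} (marg : V × V → ℤ) (o : List (V × V)) :
    Finset (V × V) :=
  o.foldl (semiRiverStep marg) ∅

/-- The runs of the directed Prim algorithm on the digraph with edge set `E`, weight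
function `w`, and start vertex `s`: `PrimRun E w s S T` holds if after some number of
steps the set of explored vertices is `S` and the collected tree edges are `T`; at each
step an arbitrary crossing edge of maximum weight is selected. -/
inductive PrimRun {V : Type*} {β : Type*} [LinearOrder β] (E : Finset (V × V))
    (w : V × V → β) (s : V) : Finset V → Finset (V × V) → Prop
  | init : PrimRun E w s {s} ∅
  | step {S : Finset V} {T : Finset (V × V)} (e : V × V) (he : e ∈ E)
      (h1 : e.1 ∈ S) (h2 : e.2 ∉ S)
      (hmax : ∀ f ∈ E, f.1 ∈ S → f.2 ∉ S → w f ≤ w e)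
      (hrun : PrimRun E w s S T) :
      PrimRun E w s (insert e.2 S) (insert e T)

/-- `T` is a possible output of the directed Prim algorithm on `(E, w)` started at `s`:
it is obtained by a run that has terminated, i.e. no crossing edge remains. -/
def IsPrimOutput {V : Type*} {β : Type*} [LinearOrder β] (E : Finset (V × V))
    (w : V × V → β) (s : V) (T : Finset (V × V)) : Prop :=
  ∃ S : Finset V, PrimRun E w s S T ∧ ∀ f ∈ E, f.1 ∈ S → f.2 ∈ S

/-- The strength of a path (as a list of vertices): the minimum weight of its edges,
`⊤` for a trivial path with no edges. -/
noncomputable def strength {V : Type*} (w : V × V → ℕ) (l : List V) : ℕ∞ :=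
  ((l.zip l.tail).map fun p => (w p : ℕ∞)).foldr min ⊤

/-- `l` is a strongest path from `x` to `y`: it is a path from `x` to `y` and no path
from `x` to `y` has (strictly) greater strength. -/
def IsStrongestPath {V : Type*} (E : Finset (V × V)) (w : V × V → ℕ) (l : List V)
    (x y : V) : Prop :=
  IsPathFrom E l x y ∧ ∀ l', IsPathFrom E l' x y → strength w l' ≤ strength w l

/-- `o` is a descending linear ordering of `E` in which, among edges of equal margin,
edges belonging to `E'` come before edges not belonging to `E'`. -/
def IsSetOrdering {V : Type*} (marg : V × V → ℤ) (E E' : Finset (V × V))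
    (o : List (V × V)) : Prop :=
  o.Nodup ∧ (∀ e, e ∈ o ↔ e ∈ E) ∧
    o.Pairwise fun e f => marg f ≤ marg e ∧ (marg e = marg f → f ∈ E' → e ∈ E')

section RiverAux

variable {V : Type*}

lemma reach_refl (E : Finset (V × V)) (x : V) : Reach E x x :=
  ⟨[x], by simp [IsPathFrom, List.Chain', List.isChain_singleton]⟩

lemma reach_mono {E E' : Finset (V × V)} (h : E ⊆ E') {x y : V} (hr : Reach E x y) :
    Reach E' x y := by
  obtain ⟨l, h1, h2, h3, h4, h5⟩ := hr
  exact ⟨l, h1, h2, h3, h4, h5.imp fun _ _ hab => h hab⟩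

lemma reach_of_mem_path {E : Finset (V × V)} :
    ∀ {l : List V} {z y x : V}, IsPathFrom E l z y → x ∈ l → Reach E x y := by
  intro l
  induction l with
  | nil => intro z y x h hx; simp at hx
  | cons a t ih =>
    intro z y x h hx
    obtain ⟨h1, h2, h3, h4, h5⟩ := h
    rw [List.mem_cons] at hx
    rcases hx with hx | hx
    · subst hx
      exact ⟨x :: t, h1, h2, rfl, h4, h5⟩
    · have tne : t ≠ [] := List.ne_nil_of_mem hx
      obtain ⟨b, t', rfl⟩ := List.exists_cons_of_ne_nil tne
      exact ih ⟨List.cons_ne_nil _ _, (List.nodup_cons.mp h2).2, rfl,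
        by rw [List.getLast?_cons_cons] at h4; exact h4, h5.tail⟩ hx

lemma reach_cons {E : Finset (V × V)} {x z y : V} (he : (x, z) ∈ E) (h : Reach E z y) :
    Reach E x y := by
  obtain ⟨l, h1, h2, h3, h4, h5⟩ := h
  by_cases hx : x ∈ l
  · exact reach_of_mem_path ⟨h1, h2, h3, h4, h5⟩ hx
  · obtain ⟨b, t, rfl⟩ := List.exists_cons_of_ne_nil h1
    have hb : b = z := by simpa using h3
    subst hb
    refine ⟨x :: b :: t, List.cons_ne_nil _ _, List.nodup_cons.mpr ⟨hx, h2⟩, by simp,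
      by rw [List.getLast?_cons_cons]; exact h4, ?_⟩
    exact List.isChain_cons.mpr ⟨fun y' hy' => by simp at hy'; subst hy'; exact he, h5⟩

lemma reach_of_chain_trans {E : Finset (V × V)} {z : V} :
    ∀ {l : List V} {x y : V}, l ≠ [] → l.head? = some x → l.getLast? = some y →
      l.Chain' (fun a b => (a, b) ∈ E) → Reach E y z → Reach E x z := by
  intro l
  induction l with
  | nil => intro x y h; exact absurd rfl h
  | cons a t ih =>
    intro x y _ h2 h3 h4 h5
    have ha : a = x := by simpa using h2
    subst ha
    match t with
    | [] =>
      have : a = y := by simpa using h3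
      subst this; exact h5
    | b :: t' =>
      have hab : (a, b) ∈ E := (List.isChain_cons_cons.mp h4).1
      have := ih (List.cons_ne_nil _ _) rfl
        (by rw [List.getLast?_cons_cons] at h3; exact h3) (List.isChain_cons_cons.mp h4).2 h5
      exact reach_cons hab this

lemma reach_trans {E : Finset (V × V)} {x y z : V} (h1 : Reach E x y) (h2 : Reach E y z) :
    Reach E x z := by
  obtain ⟨l, p1, p2, p3, p4, p5⟩ := h1
  exact reach_of_chain_trans p1 p3 p4 p5 h2

lemma reach_insert {E : Finset (V × V)} {e : V × V} {a b : V}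
    (h : Reach (insert e E) a b) :
    Reach E a b ∨ (Reach E a e.1 ∧ Reach E e.2 b) := by
  obtain ⟨l, h1, h2, h3, h4, h5⟩ := h
  clear h2
  induction l generalizing a with
  | nil => exact absurd rfl h1
  | cons c t ih =>
    have hc : c = a := by simpa using h3
    subst hc
    match t with
    | [] =>
      have : c = b := by simpa using h4
      subst this; exact Or.inl (reach_refl E c)
    | d :: t' =>
      have hcd : (c, d) ∈ insert e E := (List.isChain_cons_cons.mp h5).1
      have hrec := ih (List.cons_ne_nil _ _) rfl
        (by rw [List.getLast?_cons_cons] at h4; exact h4) (List.isChain_cons_cons.mp h5).2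
      rcases Finset.mem_insert.mp hcd with heq | hmem
      · have hc1 : c = e.1 := by rw [← heq]
        have hd2 : d = e.2 := by rw [← heq]
        subst hc1; subst hd2
        rcases hrec with hr | ⟨_, hr2⟩
        · exact Or.inr ⟨reach_refl E e.1, hr⟩
        · exact Or.inr ⟨reach_refl E e.1, hr2⟩
      · rcases hrec with hr | ⟨hr1, hr2⟩
        · exact Or.inl (reach_cons hmem hr)
        · exact Or.inr ⟨reach_cons hmem hr1, hr2⟩

lemma incoming_of_reach {E : Finset (V × V)} {x y : V} (h : Reach E x y) (hne : x ≠ y) :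
    ∃ u, (u, y) ∈ E := by
  obtain ⟨l, h1, h2, h3, h4, h5⟩ := h
  have h5' : l.reverse.Chain' (fun a b => (b, a) ∈ E) := List.isChain_reverse.mpr h5
  have hh : l.reverse.head? = some y := by rw [List.head?_reverse]; exact h4
  have hl : l.reverse.getLast? = some x := by rw [List.getLast?_reverse]; exact h3
  match hrev : l.reverse with
  | [] => rw [hrev] at hh; simp at hh
  | [c] =>
    rw [hrev] at hh hl
    simp at hh hl
    exact absurd (hl.symm.trans hh) hne
  | c :: d :: t =>
    rw [hrev] at hh h5'
    have hc : c = y := by simpa using hh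
    subst hc
    exact ⟨d, (List.isChain_cons_cons.mp h5').1⟩

lemma list_eq_singleton_of_head_getLast {l : List V} {x : V} (hnd : l.Nodup)
    (h1 : l.head? = some x) (h2 : l.getLast? = some x) : l = [x] := by
  match l with
  | [] => simp at h1
  | [a] =>
    have hax : a = x := by simpa using h1
    rw [hax]
  | a :: b :: t =>
    have ha : a = x := by simpa using h1
    subst ha
    rw [List.getLast?_cons_cons] at h2
    obtain ⟨hne, hx⟩ := List.mem_getLast?_eq_getLast h2
    have : a ∈ b :: t := hx ▸ List.getLast_mem hne
    exact absurd this (List.nodup_cons.mp hnd).1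

lemma rpath_unique {D : Finset (V × V)}
    (hdeg : ∀ e ∈ D, ∀ f ∈ D, e.2 = f.2 → e = f) {r : V} :
    ∀ (n : ℕ) (m1 m2 : List V) (v : V), m1.length ≤ n →
      (m1 ≠ [] ∧ m1.Nodup ∧ m1.head? = some v ∧ m1.getLast? = some r ∧
        m1.Chain' fun a b => (b, a) ∈ D) →
      (m2 ≠ [] ∧ m2.Nodup ∧ m2.head? = some v ∧ m2.getLast? = some r ∧
        m2.Chain' fun a b => (b, a) ∈ D) → m1 = m2 := by
  intro n
  induction n with
  | zero =>
    intro m1 m2 v hlen h1 _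
    exact absurd (List.length_eq_zero_iff.mp (Nat.le_zero.mp hlen)) h1.1
  | succ n ih =>
    intro m1 m2 v hlen ⟨a1, b1, c1, d1, e1⟩ ⟨a2, b2, c2, d2, e2⟩
    by_cases hvr : v = r
    · subst hvr
      rw [list_eq_singleton_of_head_getLast b1 c1 d1,
        list_eq_singleton_of_head_getLast b2 c2 d2]
    · obtain ⟨x1, s1, rfl⟩ := List.exists_cons_of_ne_nil a1
      obtain ⟨x2, s2, rfl⟩ := List.exists_cons_of_ne_nil a2
      have hx1 : x1 = v := by simpa using c1
      have hx2 : x2 = v := by simpa using c2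
      rw [hx1] at e1 ⊢
      rw [hx2] at e2 ⊢
      have s1ne : s1 ≠ [] := by
        rintro rfl; exact hvr (hx1 ▸ (by simpa using d1))
      have s2ne : s2 ≠ [] := by
        rintro rfl; exact hvr (hx2 ▸ (by simpa using d2))
      obtain ⟨u1, t1, rfl⟩ := List.exists_cons_of_ne_nil s1ne
      obtain ⟨u2, t2, rfl⟩ := List.exists_cons_of_ne_nil s2ne
      have hu1 : (u1, v) ∈ D := (List.isChain_cons_cons.mp e1).1
      have hu2 : (u2, v) ∈ D := (List.isChain_cons_cons.mp e2).1
      have hu : u1 = u2 := by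
        have := hdeg (u1, v) hu1 (u2, v) hu2 rfl
        exact (Prod.mk.injEq _ _ _ _ ▸ this).1
      subst hu
      have htail := ih (u1 :: t1) (u1 :: t2) u1 (by simpa using hlen)
        ⟨List.cons_ne_nil _ _, (List.nodup_cons.mp b1).2, by simp,
          by rw [List.getLast?_cons_cons] at d1; exact d1, (List.isChain_cons_cons.mp e1).2⟩
        ⟨List.cons_ne_nil _ _, (List.nodup_cons.mp b2).2, by simp,
          by rw [List.getLast?_cons_cons] at d2; exact d2, (List.isChain_cons_cons.mp e2).2⟩
      rw [htail]

lemma path_unique {D : Finset (V × V)}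
    (hdeg : ∀ e ∈ D, ∀ f ∈ D, e.2 = f.2 → e = f) {r v : V} {l1 l2 : List V}
    (h1 : IsPathFrom D l1 r v) (h2 : IsPathFrom D l2 r v) : l1 = l2 := by
  obtain ⟨a1, b1, c1, d1, e1⟩ := h1
  obtain ⟨a2, b2, c2, d2, e2⟩ := h2
  have key := rpath_unique hdeg (l1.reverse.length) l1.reverse l2.reverse v le_rfl
    ⟨by simpa using a1, by simpa using b1, by rw [List.head?_reverse]; exact d1,
      by rw [List.getLast?_reverse]; exact c1, List.isChain_reverse.mpr e1⟩
    ⟨by simpa using a2, by simpa using b2, by rw [List.head?_reverse]; exact d2,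
      by rw [List.getLast?_reverse]; exact c2, List.isChain_reverse.mpr e2⟩
  exact List.reverse_injective key

/-- The invariant maintained by the River procedure. -/
def GoodDiagram (D : Finset (V × V)) : Prop :=
  (∀ e ∈ D, ∀ f ∈ D, e.2 = f.2 → e = f) ∧ ¬ HasCycle D

lemma goodDiagram_empty : GoodDiagram (∅ : Finset (V × V)) := by
  constructor
  · intro e he; simp at he
  · rintro ⟨f, hf, -⟩; simp at hf

lemma subset_riverStep (D : Finset (V × V)) (e : V × V) : D ⊆ riverStep D e := by
  unfold riverStep
  split
  · exact subset_rfl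
  · exact Finset.subset_insert _ _

lemma subset_riverFoldl : ∀ (l : List (V × V)) (D : Finset (V × V)),
    D ⊆ l.foldl riverStep D := by
  intro l
  induction l with
  | nil => intro D; exact subset_rfl
  | cons a t ih =>
    intro D
    exact (subset_riverStep D a).trans (ih (riverStep D a))

lemma goodDiagram_riverStep {D : Finset (V × V)} (hg : GoodDiagram D) (e : V × V) :
    GoodDiagram (riverStep D e) := by
  unfold riverStep
  split
  · exact hg
  · next h =>
    rw [not_or] at h
    obtain ⟨h1, h2⟩ := h
    constructor
    · intro f hf g hgm heq
      rcases Finset.mem_insert.mp hf with hfe | hfD <;>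
        rcases Finset.mem_insert.mp hgm with hge | hgD
      · rw [hfe, hge]
      · exact absurd ⟨g, hgD, by rw [← heq, hfe]⟩ h1
      · exact absurd ⟨f, hfD, by rw [heq, hge]⟩ h1
      · exact hg.1 f hfD g hgD heq
    · rintro ⟨f, hf, hr⟩
      rcases Finset.mem_insert.mp hf with rfl | hf
      · rcases reach_insert hr with hr' | ⟨_, hr'⟩ <;> exact h2 hr'
      · rcases reach_insert hr with hr' | ⟨hr1, hr2⟩
        · exact hg.2 ⟨f, hf, hr'⟩
        · have hfD : (f.1, f.2) ∈ D := by simpa using hf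
          exact h2 (reach_trans hr2 (reach_cons hfD hr1))

lemma goodDiagram_foldl : ∀ (l : List (V × V)) (D : Finset (V × V)),
    GoodDiagram D → GoodDiagram (l.foldl riverStep D) := by
  intro l
  induction l with
  | nil => intro D h; exact h
  | cons a t ih => intro D h; exact ih _ (goodDiagram_riverStep h a)

/-- After processing, each edge is present, blocked by (R1), or blocked by (R2). -/
def Procd (e : V × V) (D : Finset (V × V)) : Prop :=
  e ∈ D ∨ (∃ f ∈ D, f.2 = e.2) ∨ Reach D e.2 e.1

lemma procd_mono {D D' : Finset (V × V)} (h : D ⊆ D') {e : V × V} :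
    Procd e D → Procd e D' := by
  rintro (h1 | ⟨f, hf, h2⟩ | h3)
  · exact Or.inl (h h1)
  · exact Or.inr (Or.inl ⟨f, h hf, h2⟩)
  · exact Or.inr (Or.inr (reach_mono h h3))

lemma procd_riverStep (D : Finset (V × V)) (e : V × V) : Procd e (riverStep D e) := by
  unfold riverStep
  split
  · next h => exact procd_mono subset_rfl (Or.inr h)
  · exact Or.inl (Finset.mem_insert_self _ _)

lemma procd_foldl : ∀ {l : List (V × V)} {e : V × V}, e ∈ l →
    ∀ D : Finset (V × V), Procd e (l.foldl riverStep D) := by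
  intro l
  induction l with
  | nil => intro e he; simp at he
  | cons a t ih =>
    intro e he D
    rw [List.mem_cons] at he
    rcases he with rfl | he
    · exact procd_mono (subset_riverFoldl t _) (procd_riverStep D e)
    · exact ih he _

lemma exists_root_aux [Fintype V] {D : Finset (V × V)} (hg : GoodDiagram D) :
    ∀ (k : ℕ) (v : V),
      Fintype.card V ≤ k + (Finset.univ.filter fun w => Reach D v w).card →
      ∃ r, noIncoming D r ∧ Reach D r v := by
  intro k
  induction k with
  | zero =>
    intro v hv
    have huniv : (Finset.univ.filter fun w => Reach D v w) = Finset.univ := by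
      apply Finset.eq_univ_of_card
      exact le_antisymm (Finset.card_le_univ _) (by simpa using hv)
    have hall : ∀ w, Reach D v w := by
      intro w
      have : w ∈ Finset.univ.filter fun w => Reach D v w := by
        rw [huniv]; exact Finset.mem_univ w
      exact (Finset.mem_filter.mp this).2
    refine ⟨v, ?_, reach_refl D v⟩
    intro e he he2
    exact hg.2 ⟨e, he, he2 ▸ hall e.1⟩
  | succ k ih =>
    intro v hv
    by_cases hni : noIncoming D v
    · exact ⟨v, hni, reach_refl D v⟩
    · simp only [noIncoming, not_forall] at hni
      obtain ⟨e, he, he2⟩ := hni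
      rw [not_not] at he2
      have heD : (e.1, v) ∈ D := by rw [← he2]; simpa using he
      have hnvu : ¬ Reach D v e.1 := fun hr => hg.2 ⟨e, he, he2 ▸ hr⟩
      have hsub : (Finset.univ.filter fun w => Reach D v w) ⊂
          (Finset.univ.filter fun w => Reach D e.1 w) := by
        constructor
        · intro w hw
          rw [Finset.mem_filter] at hw ⊢
          exact ⟨hw.1, reach_cons heD hw.2⟩
        · intro hcon
          have : e.1 ∈ Finset.univ.filter fun w => Reach D e.1 w :=
            Finset.mem_filter.mpr ⟨Finset.mem_univ _, reach_refl D e.1⟩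
          have := hcon this
          exact hnvu (Finset.mem_filter.mp this).2
      have hcard := Finset.card_lt_card hsub
      obtain ⟨r, hr1, hr2⟩ := ih e.1 (by omega)
      exact ⟨r, hr1, reach_trans hr2 (reach_cons heD (reach_refl D v))⟩

end RiverAux

lemma margin_neg {A : Type*} [Fintype A] {m : ℕ} (P : Profile A m) (x y : A) :
    margin P x y = - margin P y x := by
  unfold margin; ring

lemma tournament_edge {A : Type*} [Fintype A] {m : ℕ} (P : Profile A m) {a b : A}
    (hne : a ≠ b) : (a, b) ∈ marginEdges P ∨ (b, a) ∈ marginEdges P := by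
  rcases le_total 0 (margin P a b) with h | h
  · exact Or.inl (Finset.mem_filter.mpr ⟨Finset.mem_univ _, hne, h⟩)
  · refine Or.inr (Finset.mem_filter.mpr ⟨Finset.mem_univ _, hne.symm, ?_⟩)
    show (0 : ℤ) ≤ margin P b a
    rw [margin_neg] at h
    omega

lemma no_two_roots {A : Type*} [Fintype A] {m : ℕ} {P : Profile A m}
    {o : List (A × A)} (ho : IsDescOrdering (marginE P) (marginEdges P) o)
    {a b : A} (ha : noIncoming (riverFold o) a) (hb : noIncoming (riverFold o) b) :
    a = b := by
  by_contra hne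
  have key : ∀ x y : A, x ≠ y → (x, y) ∈ o → noIncoming (riverFold o) x →
      noIncoming (riverFold o) y → False := by
    intro x y hxy hmem hx hy
    rcases procd_foldl hmem ∅ with h1 | ⟨f, hf, h2⟩ | h3
    · exact hy (x, y) h1 rfl
    · exact hy f hf h2
    · obtain ⟨u, hu⟩ := incoming_of_reach h3 (Ne.symm hxy)
      exact hx (u, x) hu rfl
  rcases tournament_edge P hne with h | h
  · exact key a b hne ((ho.2.1 _).mpr h) ha hb
  · exact key b a (Ne.symm hne) ((ho.2.1 _).mpr h) hb ha

/-- For every preference profile `P` and every descending linear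
ordering `o` of the edges of its margin graph, the River diagram `M^RV(o)` is a rooted
tree, its root is unique, and the root is the unique River winner (the unique
alternative with no incoming edge in the River diagram). -/
theorem river_diagram_is_rooted_tree_with_unique_winner_root
    {A : Type*} [Fintype A] {m : ℕ} (hm : 1 ≤ m) (hA : 2 ≤ Fintype.card A)
    (P : Profile A m) (o : List (A × A))
    (ho : IsDescOrdering (marginE P) (marginEdges P) o) :
    ∃ r : A, IsRootedTree (riverFold o) r ∧
      (∀ r' : A, IsRootedTree (riverFold o) r' → r' = r) ∧
      ∀ a : A, noIncoming (riverFold o) a ↔ a = r := by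
  set D := riverFold o with hD
  have hgood : GoodDiagram D := goodDiagram_foldl o ∅ goodDiagram_empty
  have hne : Nonempty A := by
    rw [← Fintype.card_pos_iff]; omega
  obtain ⟨v0⟩ := hne
  obtain ⟨r, hrno, -⟩ := exists_root_aux hgood (Fintype.card A) v0 (Nat.le_add_right _ _)
  have hreach : ∀ v : A, Reach D r v := by
    intro v
    obtain ⟨r', hr'no, hr'⟩ := exists_root_aux hgood (Fintype.card A) v (Nat.le_add_right _ _)
    have : r' = r := no_two_roots ho hr'no hrno
    exact this ▸ hr'
  refine ⟨r, ⟨?_, ?_, ?_⟩, ?_, ?_⟩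
  · intro v
    obtain ⟨l, hl⟩ := hreach v
    exact ⟨l, hl, fun l' hl' => path_unique hgood.1 hl' hl⟩
  · intro e he
    exact hrno e he
  · intro e f he hf heq
    exact hgood.1 e he f hf heq
  · intro r' hr'
    exact no_two_roots ho hr'.2.1 hrno
  · intro a
    constructor
    · intro ha
      exact no_two_roots ho ha hrno
    · rintro rfl
      exact hrno
end

section
/- Let P be a preference profile and o ∈ O↓ a descending linear ordering of E(M(P)), and consider the moment when River processes the edge o[i] = (x,y). If condition (R1) is satisfied for o[i], then the incoming edge of y already present in M^RV_{i−1}(o) has margin at least m_P(x,y); and if condition (R2) is satisfied for o[i], then there is a path from y to x in M^RV_{i−1}(o) whose strength is at least m_P(x,y). -/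
attribute [local instance] Classical.propDecidable

lemma mem_riverStep' {V : Type*} (D : Finset (V × V)) (e : V × V) (x : V × V)
    (hx : x ∈ riverStep D e) : x ∈ D ∨ x = e := by
  unfold riverStep at hx
  split at hx
  · exact Or.inl hx
  · rcases Finset.mem_insert.1 hx with h | h
    · exact Or.inr h
    · exact Or.inl h

lemma mem_foldl_riverStep' {V : Type*} (o : List (V × V)) (D : Finset (V × V))
    (x : V × V) (hx : x ∈ o.foldl riverStep D) : x ∈ D ∨ x ∈ o := by
  induction o generalizing D with
  | nil => exact Or.inl hx
  | cons a l ih =>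
    rcases ih _ hx with h | h
    · rcases mem_riverStep' D a _ h with h | h
      · exact Or.inl h
      · exact Or.inr (by simp [h])
    · exact Or.inr (List.mem_cons_of_mem _ h)

lemma pairwise_take_get' {V : Type*} (R : (V×V) → (V×V) → Prop) (o : List (V×V))
    (hp : o.Pairwise R) (i : ℕ) (hi : i < o.length) (f : V×V) (hf : f ∈ o.take i) :
    R f (o.get ⟨i, hi⟩) := by
  rw [List.mem_take_iff_getElem] at hf
  obtain ⟨j, hj, rfl⟩ := hf
  rw [List.pairwise_iff_getElem] at hp
  exact hp j i _ _ (lt_of_lt_of_le hj (min_le_left _ _))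

lemma chain'_zip' {V : Type*} (R : V → V → Prop) (l : List V)
    (h : l.Chain' R) (p : V × V) (hp : p ∈ l.zip l.tail) : R p.1 p.2 := by
  induction l with
  | nil => simp at hp
  | cons a l ih =>
    cases l with
    | nil => simp at hp
    | cons b l' =>
      simp only [List.tail_cons, List.zip_cons_cons, List.mem_cons] at hp
      replace h := List.isChain_cons_cons.1 h
      rcases hp with rfl | hp
      · exact h.1
      · exact ih h.2 hp

/-- When River processes the edge `o[i] = (x, y)` (with current
diagram `D = M^RV_{i-1}(o)`, the diagram after the first `i - 1` edges, here indexed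
from `0`): if condition (R1) holds, then every incoming edge of `y` already present in
`D` has margin at least `m_P(x, y)`; and if condition (R2) holds, then there is a path
from `y` to `x` in `D` all of whose edges have margin at least `m_P(x, y)` (i.e. of
strength at least `m_P(x, y)`). -/
theorem river_conditions_need_at_least_current_margin
    {A : Type*} [Fintype A] {m : ℕ} (hm : 1 ≤ m) (hA : 2 ≤ Fintype.card A)
    (P : Profile A m) (o : List (A × A))
    (ho : IsDescOrdering (marginE P) (marginEdges P) o)
    (i : ℕ) (hi : i < o.length) (e : A × A) (he : o.get ⟨i, hi⟩ = e) :
    ((∃ f ∈ (o.take i).foldl riverStep ∅, f.2 = e.2) →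
      ∀ f ∈ (o.take i).foldl riverStep ∅, f.2 = e.2 → marginE P e ≤ marginE P f) ∧
    (Reach ((o.take i).foldl riverStep ∅) e.2 e.1 →
      ∃ l : List A, IsPathFrom ((o.take i).foldl riverStep ∅) l e.2 e.1 ∧
        ∀ p ∈ l.zip l.tail, marginE P e ≤ marginE P p) := by
  obtain ⟨hnd, hmem, hpw⟩ := ho
  have key : ∀ f ∈ (o.take i).foldl riverStep ∅, marginE P e ≤ marginE P f := by
    intro f hf
    rcases mem_foldl_riverStep' _ _ _ hf with h | h
    · simp at h
    · have := pairwise_take_get' _ o hpw i hi f h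
      rw [he] at this
      exact this
  constructor
  · exact fun _ f hf _ => key f hf
  · rintro ⟨l, hl⟩
    exact ⟨l, hl, fun p hp => key p (chain'_zip' _ l hl.2.2.2.2 p hp)⟩
end

section
/- For every preference profile P, the semi-River process produces the same semi-River diagram regardless of which descending linear ordering of E(M(P)) is chosen in its first step: for any two orderings o, o' ∈ O↓, running the semi-River process with o and with o' yields identical diagrams. -/
attribute [local instance] Classical.propDecidable

/-- The condition under which `semiRiverStep` does *not* add the edge. -/
noncomputable def sCond {V : Type*} (marg : V × V → ℤ) (D : Finset (V × V))
    (e : V × V) : Prop :=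
  let Sgt := D.filter fun f => marg e < marg f
  let sR1 : Prop := ∃ f ∈ Sgt, f.2 = e.2 ∧
      ¬ Reach (D.filter fun g => marg f ≤ marg g) e.2 f.1
  let Anc : Set V := {v | Reach (Sgt.filter fun g => g.2 ≠ e.2) v e.1}
  let ind := Sgt.filter fun g => g.1 ∈ Anc ∧ g.2 ∈ Anc
  let sR2 : Prop := e.2 ∈ Anc ∧ ¬ HasCycle ind ∧
      ∀ v ∈ Anc, ((∀ g ∈ ind, g.2 ≠ v) ↔ v = e.2)
  sR1 ∨ sR2

lemma semiRiverStep_def {V : Type*} (marg : V × V → ℤ) (D : Finset (V × V))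
    (e : V × V) :
    semiRiverStep marg D e = if sCond marg D e then D else insert e D := by
  simp only [semiRiverStep, sCond]
  congr

/-- Inserting an edge of margin at most `marg e` does not change the condition
for `e`. -/
lemma sCond_insert {V : Type*} (marg : V × V → ℤ) (D : Finset (V × V)) (x e : V × V)
    (h : marg x ≤ marg e) : sCond marg (insert x D) e ↔ sCond marg D e := by
  have hS : Finset.filter (fun f => marg e < marg f) (insert x D)
      = Finset.filter (fun f => marg e < marg f) D := by
    rw [Finset.filter_insert, if_neg (not_lt.mpr h)]
  simp only [sCond, hS]
  apply or_congr _ Iff.rfl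
  constructor <;> rintro ⟨f, hf, h1, h2⟩ <;> refine ⟨f, hf, h1, ?_⟩ <;>
  · have hfe : marg e < marg f := (Finset.mem_filter.mp hf).2
    have hfilter : Finset.filter (fun g => marg f ≤ marg g) (insert x D)
        = Finset.filter (fun g => marg f ≤ marg g) D := by
      rw [Finset.filter_insert, if_neg (not_le.mpr (lt_of_le_of_lt h hfe))]
    simp only [hfilter] at h2 ⊢
    exact h2

/-- Semi-River steps on edges of equal margin commute. -/
lemma semiRiverStep_comm {V : Type*} (marg : V × V → ℤ) (D : Finset (V × V))
    (a b : V × V) (h : marg a = marg b) :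
    semiRiverStep marg (semiRiverStep marg D a) b
      = semiRiverStep marg (semiRiverStep marg D b) a := by
  by_cases ha : sCond marg D a <;> by_cases hb : sCond marg D b <;>
    simp only [semiRiverStep_def, ha, hb, if_pos, if_neg, not_false_iff,
      sCond_insert marg D a b h.le, sCond_insert marg D b a h.ge,
      if_true, if_false, Finset.insert_comm]

lemma semiRiverFold_pull {V : Type*} (marg : V × V → ℤ) (e : V × V) :
    ∀ (l₁ l₂ : List (V × V)) (D : Finset (V × V)), (∀ a ∈ l₁, marg a = marg e) →
      List.foldl (semiRiverStep marg) D (l₁ ++ e :: l₂)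
        = List.foldl (semiRiverStep marg) (semiRiverStep marg D e) (l₁ ++ l₂) := by
  intro l₁
  induction l₁ with
  | nil => intro l₂ D _; rfl
  | cons a t ih =>
    intro l₂ D h
    simp only [List.cons_append, List.foldl_cons]
    rw [ih l₂ _ (fun x hx => h x (List.mem_cons_of_mem _ hx)),
      semiRiverStep_comm marg D a e (h a List.mem_cons_self)]

lemma semiRiverFold_eq_of_desc {V : Type*} (marg : V × V → ℤ) :
    ∀ (o o' : List (V × V)) (D : Finset (V × V)),
      o.Nodup → o'.Nodup → (∀ e, e ∈ o ↔ e ∈ o') →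
      o.Pairwise (fun e f => marg f ≤ marg e) →
      o'.Pairwise (fun e f => marg f ≤ marg e) →
      List.foldl (semiRiverStep marg) D o = List.foldl (semiRiverStep marg) D o' := by
  intro o
  induction o with
  | nil =>
    intro o' D _ _ hmem _ _
    have : o' = [] := List.eq_nil_iff_forall_not_mem.mpr
      (fun e he => List.not_mem_nil ((hmem e).mpr he))
    rw [this]
  | cons e t ih =>
    intro o' D hnd hnd' hmem hp hp'
    have he' : e ∈ o' := (hmem e).mp List.mem_cons_self
    obtain ⟨l₁, l₂, rfl⟩ := List.append_of_mem he'
    have hndl : (l₁ ++ l₂).Nodup :=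
      List.Nodup.sublist (List.Sublist.append_left (List.sublist_cons_self e l₂) l₁) hnd'
    have hel₁ : e ∉ l₁ := by
      intro hc
      exact (List.disjoint_of_nodup_append hnd') hc List.mem_cons_self
    have het : e ∉ t := (List.nodup_cons.mp hnd).1
    have hmarg : ∀ a ∈ l₁, marg a = marg e := by
      intro a ha
      have h1 : marg e ≤ marg a :=
        ((List.pairwise_append.mp hp').2.2 a ha e List.mem_cons_self)
      have hane : a ≠ e := fun hc => hel₁ (hc ▸ ha)
      have hao : a ∈ e :: t := (hmem a).mpr (List.mem_append_left _ ha)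
      have hat : a ∈ t := by
        rcases List.mem_cons.mp hao with hc | hc
        · exact absurd hc hane
        · exact hc
      exact le_antisymm ((List.pairwise_cons.mp hp).1 a hat) h1
    have hmem' : ∀ x, x ∈ t ↔ x ∈ l₁ ++ l₂ := by
      intro x
      constructor
      · intro hx
        have hxo' : x ∈ l₁ ++ e :: l₂ := (hmem x).mp (List.mem_cons_of_mem _ hx)
        have hxe : x ≠ e := fun hc => het (hc ▸ hx)
        rcases List.mem_append.mp hxo' with hc | hc
        · exact List.mem_append_left _ hc
        · rcases List.mem_cons.mp hc with hc' | hc'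
          · exact absurd hc' hxe
          · exact List.mem_append_right _ hc'
      · intro hx
        have hxe : x ≠ e := by
          intro hc; subst hc
          rcases List.mem_append.mp hx with hc | hc
          · exact hel₁ hc
          · exact (List.nodup_cons.mp (List.nodup_append.mp hnd').2.1).1 hc
        have hxo' : x ∈ l₁ ++ e :: l₂ := by
          rcases List.mem_append.mp hx with hc | hc
          · exact List.mem_append_left _ hc
          · exact List.mem_append_right _ (List.mem_cons_of_mem _ hc)
        rcases List.mem_cons.mp ((hmem x).mpr hxo') with hc | hc
        · exact absurd hc hxe
        · exact hc
    have hp't : (l₁ ++ l₂).Pairwise (fun e f => marg f ≤ marg e) :=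
      List.Pairwise.sublist (List.Sublist.append_left (List.sublist_cons_self e l₂) l₁) hp'
    calc List.foldl (semiRiverStep marg) D (e :: t)
        = List.foldl (semiRiverStep marg) (semiRiverStep marg D e) t := rfl
      _ = List.foldl (semiRiverStep marg) (semiRiverStep marg D e) (l₁ ++ l₂) :=
          ih (l₁ ++ l₂) (semiRiverStep marg D e) (List.nodup_cons.mp hnd).2 hndl
            hmem' (List.pairwise_cons.mp hp).2 hp't
      _ = List.foldl (semiRiverStep marg) D (l₁ ++ e :: l₂) :=
          (semiRiverFold_pull marg e l₁ l₂ D hmarg).symm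

/-- The semi-River process produces the same semi-River diagram
regardless of which descending linear ordering of the edges of the margin graph is
chosen in its first step. -/
theorem semi_river_diagram_independent_of_ordering
    {A : Type*} [Fintype A] {m : ℕ} (hm : 1 ≤ m) (hA : 2 ≤ Fintype.card A)
    (P : Profile A m) (o o' : List (A × A))
    (ho : IsDescOrdering (marginE P) (marginEdges P) o)
    (ho' : IsDescOrdering (marginE P) (marginEdges P) o') :
    semiRiverFold (marginE P) o = semiRiverFold (marginE P) o' := by
  obtain ⟨hnd, hmem, hp⟩ := ho
  obtain ⟨hnd', hmem', hp'⟩ := ho'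
  exact semiRiverFold_eq_of_desc (marginE P) o o' ∅ hnd hnd'
    (fun e => (hmem e).trans (hmem' e).symm) hp hp'
end

section
/- For every preference profile P, every edge that belongs to a River diagram under some tiebreak also belongs to the semi-River diagram: E(sRV(P)) ⊇ ⋃_{o ∈ O↓} E(M^RV(o, P)). -/
attribute [local instance] Classical.propDecidable

namespace Scratch
variable {V : Type*}

lemma reach_refl (E : Finset (V × V)) (x : V) : Reach E x x :=
  ⟨[x], by simp [IsPathFrom]; exact List.isChain_singleton x⟩

lemma reach_snoc {E : Finset (V × V)} {x y z : V} (h : Reach E x y) (he : (y, z) ∈ E) :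
    Reach E x z := by
  obtain ⟨l, hne, hnd, hh, hl, hc⟩ := h
  by_cases hz : z ∈ l
  · obtain ⟨l₁, l₂, rfl⟩ := List.append_of_mem hz
    simp only [List.Chain'] at hc
    rw [List.isChain_append] at hc
    refine ⟨l₁ ++ [z], by simp, ?_, ?_, List.getLast?_concat, ?_⟩
    · exact hnd.sublist (((List.nil_sublist l₂).cons₂ z).append_left l₁)
    · cases l₁ with
      | nil => simpa using hh
      | cons a t => simpa using hh
    · exact List.isChain_append.mpr ⟨hc.1, List.isChain_singleton z,
        fun p hp q hq => hc.2.2 p hp q (by simpa using hq)⟩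
  · refine ⟨l ++ [z], by simp, ?_, ?_, List.getLast?_concat, ?_⟩
    · exact List.nodup_append'.mpr ⟨hnd, List.nodup_singleton z,
        by intro a ha hb; simp at hb; subst hb; exact hz ha⟩
    · cases l with
      | nil => exact absurd rfl hne
      | cons a t => simpa using hh
    · refine List.isChain_append.mpr ⟨hc, List.isChain_singleton z, fun p hp q hq => ?_⟩
      rw [hl] at hp; simp at hp hq; subst hp; subst hq; exact he

lemma chain_rtg {E : Finset (V × V)} :
    ∀ (l : List V) (x y : V), l.head? = some x → l.getLast? = some y →
      (l.Chain' fun a b => (a, b) ∈ E) →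
      Relation.ReflTransGen (fun a b => (a, b) ∈ E) x y := by
  intro l
  induction l with
  | nil => intro x y h; simp at h
  | cons a t ih =>
    intro x y hh hl hc
    simp at hh; subst hh
    cases t with
    | nil => simp at hl; subst hl; exact Relation.ReflTransGen.refl
    | cons b t' =>
      simp only [List.Chain'] at hc
      rw [List.isChain_cons_cons] at hc
      rw [List.getLast?_cons_cons] at hl
      exact Relation.ReflTransGen.head hc.1 (ih b y rfl hl hc.2)

lemma reach_iff_rtg {E : Finset (V × V)} {x y : V} :
    Reach E x y ↔ Relation.ReflTransGen (fun a b => (a, b) ∈ E) x y := by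
  constructor
  · rintro ⟨l, hne, hnd, hh, hl, hc⟩
    exact chain_rtg l x y hh hl hc
  · intro h
    induction h with
    | refl => exact reach_refl E x
    | tail _ hbc ih => exact reach_snoc ih hbc

lemma foldl_supset (step : Finset (V × V) → (V × V) → Finset (V × V))
    (hstep : ∀ D a, D ⊆ step D a) :
    ∀ (l : List (V × V)) (D : Finset (V × V)), D ⊆ l.foldl step D := by
  intro l
  induction l with
  | nil => intro D; simp
  | cons a t ih => intro D; exact (hstep D a).trans (ih (step D a))

lemma foldl_sub (step : Finset (V × V) → (V × V) → Finset (V × V))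
    (hstep : ∀ D a, step D a ⊆ insert a D) :
    ∀ (l : List (V × V)) (D : Finset (V × V)), l.foldl step D ⊆ D ∪ l.toFinset := by
  intro l
  induction l with
  | nil => intro D; simp
  | cons a t ih =>
    intro D
    refine (ih (step D a)).trans ?_
    intro f hf
    rcases Finset.mem_union.mp hf with hf | hf
    · rcases Finset.mem_insert.mp (hstep D a hf) with rfl | hf
      · simp
      · exact Finset.mem_union.mpr (Or.inl hf)
    · simp only [List.toFinset_cons]
      exact Finset.mem_union.mpr (Or.inr (Finset.mem_insert_of_mem hf))

lemma exists_source [Fintype V] (F : Finset (V × V))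
    (hnc : ∀ f ∈ F, ¬ Relation.ReflTransGen (fun a b => (a, b) ∈ F) f.2 f.1) (v : V) :
    ∃ u, Relation.ReflTransGen (fun a b => (a, b) ∈ F) u v ∧ ∀ h ∈ F, h.2 ≠ u := by
  classical
  suffices H : ∀ (n : ℕ) (v : V),
      (Finset.univ.filter fun u => Relation.ReflTransGen (fun a b => (a, b) ∈ F) u v).card ≤ n →
      ∃ u, Relation.ReflTransGen (fun a b => (a, b) ∈ F) u v ∧ ∀ h ∈ F, h.2 ≠ u by
    exact H _ v le_rfl
  intro n
  induction n with
  | zero =>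
    intro v hcard
    exfalso
    have : v ∈ Finset.univ.filter fun u => Relation.ReflTransGen (fun a b => (a, b) ∈ F) u v :=
      Finset.mem_filter.mpr ⟨Finset.mem_univ v, Relation.ReflTransGen.refl⟩
    have := Finset.card_pos.mpr ⟨v, this⟩
    omega
  | succ n ih =>
    intro v hcard
    by_cases hv : ∀ h ∈ F, h.2 ≠ v
    · exact ⟨v, Relation.ReflTransGen.refl, hv⟩
    · push_neg at hv
      obtain ⟨h, hF, h2⟩ := hv
      have hedge : (h.1, v) ∈ F := by rw [← h2]; exact hF
      have hsub : (Finset.univ.filter fun u => Relation.ReflTransGen (fun a b => (a, b) ∈ F) u h.1)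
          ⊂ (Finset.univ.filter fun u => Relation.ReflTransGen (fun a b => (a, b) ∈ F) u v) := by
        constructor
        · intro u hu
          simp only [Finset.mem_filter, Finset.mem_univ, true_and] at hu ⊢
          exact hu.tail hedge
        · intro hcon
          have hvmem : v ∈ (Finset.univ.filter fun u =>
              Relation.ReflTransGen (fun a b => (a, b) ∈ F) u v) :=
            Finset.mem_filter.mpr ⟨Finset.mem_univ v, Relation.ReflTransGen.refl⟩
          have := hcon hvmem
          simp only [Finset.mem_filter, Finset.mem_univ, true_and] at this
          exact hnc h hF (h2 ▸ this)
      have := Finset.card_lt_card hsub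
      obtain ⟨u, hu, hnoin⟩ := ih h.1 (by omega)
      exact ⟨u, hu.tail hedge, hnoin⟩

end Scratch

namespace Scratch

lemma riverStep_supset {V : Type*} (D : Finset (V × V)) (e : V × V) : D ⊆ riverStep D e := by
  unfold riverStep; split_ifs
  · exact subset_rfl
  · exact Finset.subset_insert e D

lemma riverStep_sub {V : Type*} (D : Finset (V × V)) (e : V × V) :
    riverStep D e ⊆ insert e D := by
  unfold riverStep; split_ifs
  · exact Finset.subset_insert e D
  · exact subset_rfl

lemma semiRiverStep_supset {V : Type*} (marg : V × V → ℤ) (D : Finset (V × V)) (e : V × V) :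
    D ⊆ semiRiverStep marg D e := by
  simp only [semiRiverStep]; split_ifs
  · exact subset_rfl
  · exact Finset.subset_insert e D

lemma semiRiverStep_sub {V : Type*} (marg : V × V → ℤ) (D : Finset (V × V)) (e : V × V) :
    semiRiverStep marg D e ⊆ insert e D := by
  simp only [semiRiverStep]; split_ifs
  · exact Finset.subset_insert e D
  · exact subset_rfl

end Scratch


namespace Scratch

lemma mem_riverFold_mem_list {V : Type*} {l : List (V × V)} {e : V × V}
    (he : e ∈ riverFold l) : e ∈ l := by
  unfold riverFold at he
  have := foldl_sub riverStep riverStep_sub l ∅ he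
  simpa using this

lemma mem_semiRiverFold_mem_list {V : Type*} (marg : V × V → ℤ) {l : List (V × V)} {e : V × V}
    (he : e ∈ semiRiverFold marg l) : e ∈ l := by
  unfold semiRiverFold at he
  have := foldl_sub (semiRiverStep marg) (semiRiverStep_sub marg) l ∅ he
  simpa using this

lemma riverFold_prefix_subset {V : Type*} (l₁ l₂ : List (V × V)) :
    riverFold l₁ ⊆ riverFold (l₁ ++ l₂) := by
  unfold riverFold; rw [List.foldl_append]
  exact foldl_supset _ riverStep_supset l₂ _

lemma semiRiverFold_prefix_subset {V : Type*} (marg : V × V → ℤ) (l₁ l₂ : List (V × V)) :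
    semiRiverFold marg l₁ ⊆ semiRiverFold marg (l₁ ++ l₂) := by
  unfold semiRiverFold; rw [List.foldl_append]
  exact foldl_supset _ (semiRiverStep_supset marg) l₂ _

lemma mem_riverFold_elim {V : Type*} {o' : List (V × V)} (hnd : o'.Nodup) {e : V × V}
    (he : e ∈ riverFold o') :
    ∃ l₁ l₂, o' = l₁ ++ e :: l₂ ∧
      ¬((∃ f ∈ riverFold l₁, f.2 = e.2) ∨ Reach (riverFold l₁) e.2 e.1) := by
  have heo : e ∈ o' := mem_riverFold_mem_list he
  obtain ⟨l₁, l₂, rfl⟩ := List.append_of_mem heo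
  have hnd' := List.nodup_append'.mp hnd
  have hel₁ : e ∉ l₁ := fun h => (hnd'.2.2 h (List.mem_cons_self))
  have hel₂ : e ∉ l₂ := (List.nodup_cons.mp hnd'.2.1).1
  refine ⟨l₁, l₂, rfl, ?_⟩
  intro hcond
  have hfe : riverFold (l₁ ++ e :: l₂) = List.foldl riverStep (riverStep (riverFold l₁) e) l₂ := by
    unfold riverFold; rw [List.foldl_append]; rfl
  rw [hfe] at he
  have hin := foldl_sub riverStep riverStep_sub l₂ _ he
  rcases Finset.mem_union.mp hin with h | h
  · unfold riverStep at h
    rw [if_pos hcond] at h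
    exact hel₁ (mem_riverFold_mem_list h)
  · exact hel₂ (List.mem_toFinset.mp h)

lemma riverFold_cases {V : Type*} (l₁ l₂ : List (V × V)) (g : V × V) :
    g ∈ riverFold (l₁ ++ g :: l₂) ∨
      ((∃ f ∈ riverFold l₁, f.2 = g.2) ∨ Reach (riverFold l₁) g.2 g.1) := by
  by_cases hcond : (∃ f ∈ riverFold l₁, f.2 = g.2) ∨ Reach (riverFold l₁) g.2 g.1
  · exact Or.inr hcond
  · left
    have hfe : riverFold (l₁ ++ g :: l₂) = List.foldl riverStep (riverStep (riverFold l₁) g) l₂ := by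
      unfold riverFold; rw [List.foldl_append]; rfl
    rw [hfe]
    apply foldl_supset _ riverStep_supset l₂ _
    unfold riverStep; rw [if_neg hcond]
    exact Finset.mem_insert_self _ _

end Scratch

/-- For every preference profile `P`, every edge that belongs to a
River diagram under some tiebreak also belongs to the semi-River diagram
(computed with any descending linear ordering `o`):
`E(sRV(P)) ⊇ ⋃_{o' ∈ O↓} E(M^RV(o', P))`. -/
theorem semi_river_diagram_superset_of_all_river_diagrams
    {A : Type*} [Fintype A] {m : ℕ} (hm : 1 ≤ m) (hA : 2 ≤ Fintype.card A)
    (P : Profile A m) (o : List (A × A))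
    (ho : IsDescOrdering (marginE P) (marginEdges P) o)
    (o' : List (A × A)) (ho' : IsDescOrdering (marginE P) (marginEdges P) o') :
    riverFold o' ⊆ semiRiverFold (marginE P) o := by
  classical
  obtain ⟨hndo, hmemo, hpwo⟩ := ho
  obtain ⟨hndo', hmemo', hpwo'⟩ := ho'
  have hRE : ∀ f ∈ riverFold o', f ∈ marginEdges P := fun f hf =>
    (hmemo' f).mp (Scratch.mem_riverFold_mem_list hf)
  -- main body
  have body : ∀ e : A × A,
      (∀ h, h ∈ riverFold o' → marginE P e < marginE P h → h ∈ semiRiverFold (marginE P) o) →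
      e ∈ riverFold o' → e ∈ semiRiverFold (marginE P) o := by
    intro e hIH heR
    obtain ⟨a₁, a₂, hsplit', hnotcond⟩ := Scratch.mem_riverFold_elim hndo' heR
    rw [not_or] at hnotcond
    obtain ⟨hR1', hR2⟩ := hnotcond
    push_neg at hR1'
    set D' := riverFold a₁ with hD'def
    have hR1 : ∀ h ∈ D', h.2 ≠ e.2 := hR1'
    have hD'R : D' ⊆ riverFold o' := by
      rw [hsplit']; exact Scratch.riverFold_prefix_subset a₁ (e :: a₂)
    have hpwsplit := hsplit' ▸ hpwo'
    have hpa₁ : a₁.Pairwise fun u w => marginE P w ≤ marginE P u :=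
      (List.pairwise_append.mp hpwsplit).1
    have ha₂le : ∀ f ∈ a₂, marginE P f ≤ marginE P e :=
      (List.pairwise_cons.mp (List.pairwise_append.mp hpwsplit).2.1).1
    have hhigh_mem_a₁ : ∀ g : A × A, g ∈ marginEdges P → marginE P e < marginE P g → g ∈ a₁ := by
      intro g hgE hglt
      have hgo' : g ∈ a₁ ++ e :: a₂ := hsplit' ▸ (hmemo' g).mpr hgE
      rcases List.mem_append.mp hgo' with h | h
      · exact h
      · rcases List.mem_cons.mp h with rfl | h
        · exact absurd hglt (lt_irrefl _)
        · exact absurd hglt (not_lt.mpr (ha₂le g h))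
    have hdec : ∀ g : A × A, g ∈ marginEdges P → marginE P e < marginE P g →
        g ∈ D' ∨ ∃ Dg : Finset (A × A), Dg ⊆ D' ∧ (∀ f ∈ Dg, marginE P g ≤ marginE P f) ∧
          ((∃ f ∈ Dg, f.2 = g.2) ∨ Reach Dg g.2 g.1) := by
      intro g hgE hglt
      obtain ⟨b₁, b₂, hb⟩ := List.append_of_mem (hhigh_mem_a₁ g hgE hglt)
      rcases Scratch.riverFold_cases b₁ b₂ g with hacc | hcond
      · left; rw [hD'def, hb]; exact hacc
      · right
        refine ⟨riverFold b₁, ?_, ?_, hcond⟩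
        · rw [hD'def, hb]; exact Scratch.riverFold_prefix_subset b₁ (g :: b₂)
        · intro f hf
          have hfb₁ : f ∈ b₁ := Scratch.mem_riverFold_mem_list hf
          have := hb ▸ hpa₁
          exact (List.pairwise_append.mp this).2.2 f hfb₁ g (List.mem_cons_self)
    -- semi-river side
    have heE : e ∈ marginEdges P := hRE e heR
    have heo : e ∈ o := (hmemo e).mpr heE
    obtain ⟨c₁, c₂, hc⟩ := List.append_of_mem heo
    set D₁ := semiRiverFold (marginE P) c₁ with hD₁def
    have hgoal_eq : semiRiverFold (marginE P) o =
        List.foldl (semiRiverStep (marginE P)) (semiRiverStep (marginE P) D₁ e) c₂ := by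
      rw [hc]; unfold semiRiverFold; rw [List.foldl_append]; rfl
    have hD₁S : D₁ ⊆ semiRiverFold (marginE P) o := by
      rw [hc]; exact Scratch.semiRiverFold_prefix_subset (marginE P) c₁ (e :: c₂)
    have hSE : ∀ f ∈ semiRiverFold (marginE P) o, f ∈ marginEdges P := fun f hf =>
      (hmemo f).mp (Scratch.mem_semiRiverFold_mem_list (marginE P) hf)
    have hc₂le : ∀ f ∈ c₂, marginE P f ≤ marginE P e := by
      have hpwsplit2 := hc ▸ hpwo
      exact (List.pairwise_cons.mp (List.pairwise_append.mp hpwsplit2).2.1).1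
    have hfilter : ∀ (p : A × A → Prop) (hp : DecidablePred p), ¬ p e → (∀ f ∈ c₂, ¬ p f) →
        @Finset.filter _ p hp (semiRiverFold (marginE P) o) = @Finset.filter _ p hp D₁ := by
      intro p hp hpe hpc
      apply Finset.Subset.antisymm
      · intro f hf
        obtain ⟨hfS, hpf⟩ := Finset.mem_filter.mp hf
        rw [hgoal_eq] at hfS
        have hin := Scratch.foldl_sub (semiRiverStep (marginE P))
          (Scratch.semiRiverStep_sub (marginE P)) c₂ _ hfS
        rcases Finset.mem_union.mp hin with h | h
        · rcases Finset.mem_insert.mp (Scratch.semiRiverStep_sub (marginE P) D₁ e h) with rfl | h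
          · exact absurd hpf hpe
          · exact Finset.mem_filter.mpr ⟨h, hpf⟩
        · exact absurd hpf (hpc f (List.mem_toFinset.mp h))
      · exact Finset.filter_subset_filter p hD₁S
    have hSgt_eq : (semiRiverFold (marginE P) o).filter (fun f => marginE P e < marginE P f) =
        D₁.filter (fun f => marginE P e < marginE P f) :=
      hfilter (fun f => marginE P e < marginE P f) _ (by exact lt_irrefl _)
        (fun f hf => by exact not_lt.mpr (hc₂le f hf))
    have hSge_eq : ∀ f : A × A, marginE P e < marginE P f →
        (semiRiverFold (marginE P) o).filter (fun g => marginE P f ≤ marginE P g) =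
        D₁.filter (fun g => marginE P f ≤ marginE P g) := fun f hflt =>
      hfilter (fun g => marginE P f ≤ marginE P g) _ (by exact not_le.mpr hflt)
        (fun g hg => by exact not_le.mpr (lt_of_le_of_lt (hc₂le g hg) hflt))
    have hIHSgt : ∀ h, h ∈ D' → marginE P e < marginE P h →
        h ∈ D₁.filter (fun f => marginE P e < marginE P f) := by
      intro h hh hlt
      rw [← hSgt_eq]
      exact Finset.mem_filter.mpr ⟨hIH h (hD'R hh) hlt, hlt⟩
    -- the step
    have hstep : e ∈ semiRiverStep (marginE P) D₁ e := by
      simp only [semiRiverStep]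
      split_ifs with hcond
      · exfalso
        rcases hcond with ⟨f, hfSgt, hf2, hnr⟩ | ⟨hyAnc, hnc, hsrc⟩
        · -- sR1 refutation
          obtain ⟨hfD₁, hflt⟩ := Finset.mem_filter.mp hfSgt
          have hfE : f ∈ marginEdges P := hSE f (hD₁S hfD₁)
          rcases hdec f hfE hflt with hfD' | ⟨Dg, hDgD', hDgm, hcase⟩
          · exact hR1 f hfD' hf2
          · rcases hcase with ⟨h, hhDg, hh2⟩ | hre
            · exact hR1 h (hDgD' hhDg) (hh2.trans hf2)
            · apply hnr
              have hsub2 : Dg ⊆ D₁.filter fun g => marginE P f ≤ marginE P g := by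
                intro h hh
                rw [← hSge_eq f hflt]
                exact Finset.mem_filter.mpr
                  ⟨hIH h (hD'R (hDgD' hh)) (lt_of_lt_of_le hflt (hDgm h hh)), hDgm h hh⟩
              have hrtg := Scratch.reach_iff_rtg.mp hre
              rw [hf2] at hrtg
              exact Scratch.reach_iff_rtg.mpr (Relation.ReflTransGen.mono (fun a b hab => hsub2 hab) _ _ hrtg)
        · -- sR2 refutation
          set Sgt := D₁.filter (fun f => marginE P e < marginE P f) with hSgtdef
          set G := Sgt.filter (fun g => g.2 ≠ e.2) with hGdef
          set Anc : Set A := {v | Reach G v e.1} with hAncdef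
          set ind := Sgt.filter (fun g => g.1 ∈ Anc ∧ g.2 ∈ Anc) with hinddef
          have hAnc_iff : ∀ v, v ∈ Anc ↔
              Relation.ReflTransGen (fun a b => (a, b) ∈ G) v e.1 := by
            intro v
            rw [hAncdef]
            simp only [Set.mem_setOf_eq]
            exact Scratch.reach_iff_rtg
          have hG_mem : ∀ h : A × A, h ∈ D' → marginE P e < marginE P h → h ∈ G := by
            intro h hh hlt
            exact Finset.mem_filter.mpr ⟨hIHSgt h hh hlt, hR1 h hh⟩
          have hAncStep : ∀ a b : A, (a, b) ∈ G → b ∈ Anc → a ∈ Anc := by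
            intro a b hab hb
            exact (hAnc_iff a).mpr (Relation.ReflTransGen.head hab ((hAnc_iff b).mp hb))
          have hind_mem : ∀ h : A × A, h ∈ Sgt → h.1 ∈ Anc → h.2 ∈ Anc → h ∈ ind := by
            intro h h1 h2 h3
            exact Finset.mem_filter.mpr ⟨h1, h2, h3⟩
          -- Step A
          have hstepA : ∀ v, v ∈ Anc → v ≠ e.2 → ∃ h, h ∈ ind ∧ h ∈ D' ∧ h.2 = v := by
            intro v hv hvne
            have hiff := hsrc v hv
            have hex : ∃ g ∈ ind, g.2 = v := by
              by_contra hcon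
              push_neg at hcon
              exact hvne (hiff.mp hcon)
            obtain ⟨g, hgind, hg2⟩ := hex
            obtain ⟨hgSgt, hg1A, hg2A⟩ := Finset.mem_filter.mp hgind
            obtain ⟨hgD₁, hglt⟩ := Finset.mem_filter.mp hgSgt
            have hgE : g ∈ marginEdges P := hSE g (hD₁S hgD₁)
            rcases hdec g hgE hglt with hgD' | ⟨Dg, hDgD', hDgm, hcase⟩
            · exact ⟨g, hgind, hgD', hg2⟩
            rcases hcase with ⟨h, hhDg, hh2⟩ | hre
            · have hhD' := hDgD' hhDg
              have hhlt : marginE P e < marginE P h := lt_of_lt_of_le hglt (hDgm h hhDg)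
              have hhG : h ∈ G := hG_mem h hhD' hhlt
              have hh2v : h.2 = v := hh2.trans hg2
              have hh1vG : (h.1, v) ∈ G := by rw [← hh2v, Prod.mk.eta]; exact hhG
              have hh1A : h.1 ∈ Anc := hAncStep h.1 v hh1vG hv
              have hh2A : h.2 ∈ Anc := by rw [hh2v]; exact hv
              exact ⟨h, hind_mem h (Finset.mem_filter.mp hhG).1 hh1A hh2A, hhD', hh2v⟩
            · exfalso
              apply hnc
              have hDgG : ∀ f ∈ Dg, f ∈ G := fun f hf =>
                hG_mem f (hDgD' hf) (lt_of_lt_of_le hglt (hDgm f hf))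
              have hclaim : ∀ z, Relation.ReflTransGen (fun a b => (a, b) ∈ Dg) z g.1 →
                  z ∈ Anc → Relation.ReflTransGen (fun a b => (a, b) ∈ ind) z g.1 := by
                intro z hz
                induction hz using Relation.ReflTransGen.head_induction_on with
                | refl => intro _; exact Relation.ReflTransGen.refl
                | @head a c hac hcb ihc =>
                  intro haA
                  have hacG : (a, c) ∈ G := hDgG _ hac
                  have hcA : c ∈ Anc := by
                    have h1 : Relation.ReflTransGen (fun x y => (x, y) ∈ G) c g.1 :=
                      Relation.ReflTransGen.mono (fun x y hxy => hDgG _ hxy) _ _ hcb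
                    exact (hAnc_iff c).mpr (h1.trans ((hAnc_iff g.1).mp hg1A))
                  have hacind : (a, c) ∈ ind :=
                    hind_mem _ (Finset.mem_filter.mp hacG).1 haA hcA
                  exact Relation.ReflTransGen.head hacind (ihc hcA)
              have hrtgDg := Scratch.reach_iff_rtg.mp hre
              rw [hg2] at hrtgDg
              have hrtg := hclaim v hrtgDg hv
              refine ⟨g, hgind, Scratch.reach_iff_rtg.mpr ?_⟩
              rw [hg2]
              exact hrtg
          -- Step B
          set F := ind ∩ D' with hFdef
          have hFnc : ∀ f ∈ F, ¬ Relation.ReflTransGen (fun a b => (a, b) ∈ F) f.2 f.1 := by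
            intro f hf hcyc
            exact hnc ⟨f, (Finset.mem_inter.mp hf).1, Scratch.reach_iff_rtg.mpr
              (Relation.ReflTransGen.mono (fun a b hab => (Finset.mem_inter.mp hab).1) _ _ hcyc)⟩
          obtain ⟨u, hru, hnoin⟩ := Scratch.exists_source F hFnc e.1
          have huAnc : u ∈ Anc := by
            rcases hru.cases_head with heq | ⟨c, hcF, _⟩
            · rw [heq]
              exact (hAnc_iff e.1).mpr Relation.ReflTransGen.refl
            · exact (Finset.mem_filter.mp (Finset.mem_inter.mp hcF).1).2.1
          have hue : u = e.2 := by
            by_contra hne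
            obtain ⟨h, hind', hD'', h2⟩ := hstepA u huAnc hne
            exact hnoin h (Finset.mem_inter.mpr ⟨hind', hD''⟩) h2
          apply hR2
          rw [← hue]
          exact Scratch.reach_iff_rtg.mpr
            (Relation.ReflTransGen.mono (fun a b hab => (Finset.mem_inter.mp hab).2) _ _ hru)
      · exact Finset.mem_insert_self e D₁
    rw [hgoal_eq]
    exact Scratch.foldl_supset _ (Scratch.semiRiverStep_supset (marginE P)) c₂ _ hstep
  -- wrap up with induction on the number of strictly higher-margin edges
  suffices H : ∀ (n : ℕ) (e : A × A),
      ((marginEdges P).filter fun f => marginE P e < marginE P f).card ≤ n →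
      e ∈ riverFold o' → e ∈ semiRiverFold (marginE P) o by
    intro e he
    exact H _ e le_rfl he
  intro n
  induction n with
  | zero =>
    intro e hc heR
    refine body e (fun h hhR hlt => ?_) heR
    exfalso
    have hmem : h ∈ (marginEdges P).filter fun f => marginE P e < marginE P f :=
      Finset.mem_filter.mpr ⟨hRE h hhR, hlt⟩
    have := Finset.card_pos.mpr ⟨h, hmem⟩
    omega
  | succ n ih =>
    intro e hc heR
    refine body e (fun h hhR hlt => ih h ?_ hhR) heR
    have hss : ((marginEdges P).filter fun f => marginE P h < marginE P f) ⊂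
        ((marginEdges P).filter fun f => marginE P e < marginE P f) := by
      constructor
      · intro f hf
        obtain ⟨hfE, hflt⟩ := Finset.mem_filter.mp hf
        exact Finset.mem_filter.mpr ⟨hfE, hlt.trans hflt⟩
      · intro hcon
        have hhmem : h ∈ (marginEdges P).filter fun f => marginE P e < marginE P f :=
          Finset.mem_filter.mpr ⟨hRE h hhR, hlt⟩
        have := Finset.mem_filter.mp (hcon hhmem)
        exact absurd this.2 (lt_irrefl _)
    have := Finset.card_lt_card hss
    omega
end

section
/- Let P be a preference profile whose margin graph M(P) is uniquely weighted, i.e., all edges of M(P) have pairwise distinct margins, so that O↓ contains exactly one descending linear ordering o. Then the semi-River diagram equals the River diagram: sRV(P) = M^RV(o, P). -/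
attribute [local instance] Classical.propDecidable

section Aux

open Relation

variable {V : Type*} {E E' : Finset (V × V)} {x y z : V}

lemma reach_tail_aux (h : Reach E x y) (hz : (y, z) ∈ E) : Reach E x z := by
  obtain ⟨l, hne, hnd, hhd, hlast, hch⟩ := h
  by_cases hm : z ∈ l
  · obtain ⟨s, t, rfl⟩ := List.append_of_mem hm
    have hpre : (s ++ [z]) <+: (s ++ z :: t) := ⟨t, by simp⟩
    refine ⟨s ++ [z], by simp, hnd.sublist hpre.sublist, ?_, by simp, hch.prefix hpre⟩
    · cases s with
      | nil => simpa using hhd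
      | cons a s' => simpa using hhd
  · refine ⟨l ++ [z], by simp, by simp [List.nodup_append, hnd, hm]; rintro a ha rfl; exact hm ha, ?_,
      by simp, ?_⟩
    · cases l with
      | nil => exact absurd rfl hne
      | cons a s' => simpa using hhd
    · change List.IsChain _ _; rw [List.isChain_append]
      refine ⟨hch, by simp, ?_⟩
      intro a ha b hb
      simp at hb
      subst hb
      rw [hlast] at ha
      simp at ha
      subst ha
      exact hz

lemma pathFrom_rtg_aux {l : List V} (h : IsPathFrom E l x y) :
    ReflTransGen (fun a b => (a, b) ∈ E) x y := by
  induction l generalizing x with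
  | nil => exact absurd rfl h.1
  | cons a t ih =>
    obtain ⟨-, hnd, hhd, hlast, hch⟩ := h
    simp at hhd; subst hhd
    cases t with
    | nil => simp at hlast; subst hlast; exact .refl
    | cons b t' =>
      change List.IsChain _ _ at hch; rw [List.isChain_cons_cons] at hch
      exact ReflTransGen.head hch.1 (ih ⟨by simp, hnd.of_cons, rfl, by
        simpa [List.getLast?_cons_cons] using hlast, hch.2⟩)

lemma reach_iff_aux : Reach E x y ↔ ReflTransGen (fun a b => (a, b) ∈ E) x y := by
  constructor
  · rintro ⟨l, hl⟩; exact pathFrom_rtg_aux hl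
  · intro h
    induction h with
    | refl => exact ⟨[x], by simp [IsPathFrom]; exact List.isChain_singleton _⟩
    | tail h1 h2 ih => exact reach_tail_aux ih h2

lemma rtg_insert_aux {e : V × V} {a b : V}
    (h : ReflTransGen (fun p q => (p, q) ∈ insert e E) a b) :
    ReflTransGen (fun p q => (p, q) ∈ E) a b ∨
      (ReflTransGen (fun p q => (p, q) ∈ E) a e.1 ∧
        ReflTransGen (fun p q => (p, q) ∈ E) e.2 b) := by
  induction h with
  | refl => exact Or.inl .refl
  | @tail c d h1 h2 ih =>
    rw [Finset.mem_insert] at h2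
    rcases h2 with h2 | h2
    · have hc : c = e.1 := by rw [Prod.ext_iff] at h2; exact h2.1
      have hd : d = e.2 := by rw [Prod.ext_iff] at h2; exact h2.2
      rcases ih with ih | ⟨ih1, ih2⟩
      · exact Or.inr ⟨hc ▸ ih, hd ▸ .refl⟩
      · exact Or.inr ⟨ih1, hd ▸ .refl⟩
    · rcases ih with ih | ⟨ih1, ih2⟩
      · exact Or.inl (ih.tail h2)
      · exact Or.inr ⟨ih1, ih2.tail h2⟩

lemma reach_mono_aux (hE : E ⊆ E') (h : Reach E x y) : Reach E' x y := by
  rw [reach_iff_aux] at h ⊢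
  exact ReflTransGen.mono (fun a b hab => hE hab) _ _ h

lemma step_eq_aux {marg : V × V → ℤ} {D : Finset (V × V)} {e : V × V}
    (hlt : ∀ f ∈ D, marg e < marg f)
    (hdeg : ∀ f g, f ∈ D → g ∈ D → f.2 = g.2 → f = g)
    (hcyc : ¬ HasCycle D) :
    semiRiverStep marg D e = riverStep D e := by
  have hSgt : D.filter (fun f => marg e < marg f) = D :=
    Finset.filter_true_of_mem hlt
  rw [semiRiverStep, riverStep]
  simp only [hSgt, Set.mem_setOf_eq]
  refine if_congr ?_ rfl rfl
  constructor
  · rintro (⟨f, hf, hf2, -⟩ | ⟨hAnc, -, -⟩)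
    · exact Or.inl ⟨f, hf, hf2⟩
    · exact Or.inr (reach_mono_aux (Finset.filter_subset _ _) hAnc)
  · rintro (⟨f, hf, hf2⟩ | hR2)
    · refine Or.inl ⟨f, hf, hf2, fun hR => ?_⟩
      have : Reach D e.2 f.1 := reach_mono_aux (Finset.filter_subset _ _) hR
      exact hcyc ⟨f, hf, hf2 ▸ this⟩
    · by_cases hR1 : ∃ f ∈ D, f.2 = e.2
      · obtain ⟨f, hf, hf2⟩ := hR1
        refine Or.inl ⟨f, hf, hf2, fun hR => ?_⟩
        have : Reach D e.2 f.1 := reach_mono_aux (Finset.filter_subset _ _) hR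
        exact hcyc ⟨f, hf, hf2 ▸ this⟩
      · have hD' : D.filter (fun g => g.2 ≠ e.2) = D :=
          Finset.filter_true_of_mem (fun g hg h => hR1 ⟨g, hg, h⟩)
        rw [hD']
        refine Or.inr ⟨hR2, ?_, ?_⟩
        · rintro ⟨f, hf, hre⟩
          have hfD : f ∈ D := (Finset.mem_filter.mp hf).1
          exact hcyc ⟨f, hfD, reach_mono_aux (Finset.filter_subset _ _) hre⟩
        · intro v hv
          constructor
          · intro hno
            by_contra hvne
            by_cases hin : ∃ g ∈ D, g.2 = v
            · obtain ⟨g, hg, hg2⟩ := hin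
              refine hno g (Finset.mem_filter.mpr ⟨hg, ?_, hg2 ▸ hv⟩) hg2
              rw [reach_iff_aux]
              refine ReflTransGen.head (b := g.2) ?_ (hg2 ▸ reach_iff_aux.mp hv)
              exact hg
            · have hU : Relator.RightUnique (Function.swap fun a b => (a, b) ∈ D) := by
                intro a b c h1 h2
                have := hdeg (b, a) (c, a) h1 h2 rfl
                simpa [Prod.ext_iff] using this
              have h1 : ReflTransGen (Function.swap fun a b => (a, b) ∈ D) e.1 v :=
                (reach_iff_aux.mp hv).swap
              have h2 : ReflTransGen (Function.swap fun a b => (a, b) ∈ D) e.1 e.2 :=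
                (reach_iff_aux.mp hR2).swap
              rcases ReflTransGen.total_of_right_unique hU h1 h2 with ht | ht
              · have ht' : ReflTransGen (fun a b => (a, b) ∈ D) e.2 v :=
                  reflTransGen_swap.mp ht
                rcases ht'.cases_tail with h | ⟨c, -, hc⟩
                · exact hvne h
                · exact hin ⟨(c, v), hc, rfl⟩
              · have ht' : ReflTransGen (fun a b => (a, b) ∈ D) v e.2 :=
                  reflTransGen_swap.mp ht
                rcases ht'.cases_tail with h | ⟨c, -, hc⟩
                · exact hvne h.symm
                · exact hR1 ⟨(c, e.2), hc, rfl⟩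
          · rintro rfl g hg
            exact fun h => hR1 ⟨g, (Finset.mem_filter.mp hg).1, h⟩

lemma river_step_inv_aux {D : Finset (V × V)} {e : V × V}
    (hdeg : ∀ f g, f ∈ D → g ∈ D → f.2 = g.2 → f = g)
    (hcyc : ¬ HasCycle D) :
    (∀ f g, f ∈ riverStep D e → g ∈ riverStep D e → f.2 = g.2 → f = g) ∧
      ¬ HasCycle (riverStep D e) ∧ riverStep D e ⊆ insert e D := by
  rw [riverStep]
  by_cases hC : (∃ f ∈ D, f.2 = e.2) ∨ Reach D e.2 e.1
  · rw [if_pos hC]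
    exact ⟨hdeg, hcyc, Finset.subset_insert _ _⟩
  · rw [if_neg hC]
    push_neg at hC
    obtain ⟨hR1, hR2⟩ := hC
    rw [reach_iff_aux] at hR2
    refine ⟨?_, ?_, subset_rfl⟩
    · intro f g hf hg hfg
      rcases Finset.mem_insert.mp hf with hfe | hf'
      · rcases Finset.mem_insert.mp hg with hge | hg'
        · rw [hfe, hge]
        · exact (hR1 g hg' (by rw [← hfg, hfe])).elim
      · rcases Finset.mem_insert.mp hg with hge | hg'
        · exact (hR1 f hf' (by rw [hfg, hge])).elim
        · exact hdeg f g hf' hg' hfg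
    · rintro ⟨f, hf, hre⟩
      rw [reach_iff_aux] at hre
      rcases Finset.mem_insert.mp hf with rfl | hf
      · rcases rtg_insert_aux hre with h | ⟨h, -⟩
        · exact hR2 h
        · exact hR2 h
      · rcases rtg_insert_aux hre with h | ⟨h1, h2⟩
        · exact hcyc ⟨f, hf, reach_iff_aux.mpr h⟩
        · exact hR2 ((h2.tail (show (f.1, f.2) ∈ D from hf)).trans h1)

lemma fold_eq_aux {marg : V × V → ℤ} :
    ∀ (o : List (V × V)) (D : Finset (V × V)),
      (∀ e ∈ o, ∀ f ∈ D, marg e < marg f) →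
      o.Pairwise (fun e f => marg f < marg e) →
      (∀ f g, f ∈ D → g ∈ D → f.2 = g.2 → f = g) →
      ¬ HasCycle D →
      List.foldl (semiRiverStep marg) D o = List.foldl riverStep D o := by
  intro o
  induction o with
  | nil => intro D _ _ _ _; rfl
  | cons e o ih =>
    intro D hlt hpw hdeg hcyc
    rw [List.pairwise_cons] at hpw
    have hstep := step_eq_aux (hlt e (by simp)) hdeg hcyc
    rw [List.foldl_cons, List.foldl_cons, hstep]
    obtain ⟨hdeg2, hcyc2, hsub⟩ := river_step_inv_aux (e := e) hdeg hcyc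
    refine ih (riverStep D e) ?_ hpw.2 hdeg2 hcyc2
    intro f hf g hg
    rcases Finset.mem_insert.mp (hsub hg) with rfl | hg2
    · exact hpw.1 f hf
    · exact hlt f (by simp [hf]) g hg2

end Aux

/-- If the margin graph of `P` is uniquely weighted (all edges have
pairwise distinct margins), so that there is exactly one descending linear ordering `o`,
then the semi-River diagram equals the River diagram: `sRV(P) = M^RV(o, P)`. -/
theorem semi_river_eq_river_of_uniquely_weighted
    {A : Type*} [Fintype A] {m : ℕ} (hm : 1 ≤ m) (hA : 2 ≤ Fintype.card A)
    (P : Profile A m)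
    (huniq : ∀ e ∈ marginEdges P, ∀ f ∈ marginEdges P,
      marginE P e = marginE P f → e = f)
    (o : List (A × A)) (ho : IsDescOrdering (marginE P) (marginEdges P) o) :
    semiRiverFold (marginE P) o = riverFold o := by
  obtain ⟨hnd, hmem, hpw⟩ := ho
  have hpw' : o.Pairwise fun e f => marginE P f < marginE P e := by
    refine (List.Pairwise.and hnd hpw).imp_of_mem ?_
    intro a b ha hb hab
    refine lt_of_le_of_ne hab.2 fun heq => hab.1 ?_
    exact huniq a ((hmem a).mp ha) b ((hmem b).mp hb) heq.symm
  rw [semiRiverFold, riverFold]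
  refine fold_eq_aux o ∅ ?_ hpw' ?_ ?_
  · intro e _ f hf; exact absurd hf (Finset.notMem_empty f)
  · intro f g hf; exact absurd hf (Finset.notMem_empty f)
  · rintro ⟨f, hf, -⟩; exact Finset.notMem_empty f hf
end

section
/- Let G = (V,E) be a finite weighted directed graph with weight function w : E → ℕ, and let s ∈ V have a path in G to every other vertex of V. Then every possible output T^RSP(s,G) of the directed Prim algorithm started at s is a recursively strongest path tree of G rooted at s: it is a rooted tree on V with root s, and whenever u precedes v in the tree, the unique tree path from u to v is a recursive strongest path in G. -/
attribute [local instance] Classical.propDecidable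

namespace PrimAux

variable {V : Type*}

lemma mem_of_getLast? {l : List V} {a : V} (h : l.getLast? = some a) : a ∈ l := by
  obtain ⟨h', rfl⟩ := List.mem_getLast?_eq_getLast h
  exact List.getLast_mem h'

lemma rel_of_chain' {R : V → V → Prop} :
    ∀ {l : List V}, l.Chain' R → ∀ p ∈ l.zip l.tail, R p.1 p.2
  | [], _, p, hp => by simp at hp
  | [_], _, p, hp => by simp at hp
  | a :: b :: t, h, p, hp => by
    rw [List.Chain', List.isChain_cons_cons] at h
    simp only [List.tail_cons, List.zip_cons_cons, List.mem_cons] at hp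
    rcases hp with rfl | hp
    · exact h.1
    · exact rel_of_chain' h.2 p hp

lemma chain'_of_rel {R : V → V → Prop} :
    ∀ {l : List V}, (∀ p ∈ l.zip l.tail, R p.1 p.2) → l.Chain' R
  | [], _ => List.isChain_nil
  | [a], _ => List.isChain_singleton a
  | a :: b :: t, h => List.isChain_cons_cons.2
      ⟨h (a, b) (by simp), chain'_of_rel (fun p hp => h p (by
        simp only [List.tail_cons] at hp
        simp only [List.tail_cons, List.zip_cons_cons, List.mem_cons]
        exact Or.inr hp))⟩

lemma snd_mem_of_zip : ∀ {l : List V} {p : V × V}, p ∈ l.zip l.tail → p.2 ∈ l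
  | [], p, hp => by simp at hp
  | [_], p, hp => by simp at hp
  | a :: b :: t, p, hp => by
    simp only [List.tail_cons, List.zip_cons_cons, List.mem_cons] at hp
    rcases hp with rfl | hp
    · simp
    · exact List.mem_cons_of_mem _ (snd_mem_of_zip hp)

lemma chain_closed {D : Finset (V × V)} {S : Finset V}
    (hcl : ∀ f ∈ D, f.1 ∈ S → f.2 ∈ S) :
    ∀ {l : List V} {a : V}, l.head? = some a → a ∈ S →
      l.Chain' (fun p q => (p, q) ∈ D) → ∀ u ∈ l, u ∈ S
  | [], a, hh, _, _, u, hu => by simp at hu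
  | [x], a, hh, ha, _, u, hu => by
    simp at hh hu; subst hh; subst hu; exact ha
  | x :: b :: t, a, hh, ha, hc, u, hu => by
    simp only [List.head?_cons, Option.some.injEq] at hh
    subst hh
    rw [List.Chain', List.isChain_cons_cons] at hc
    rcases List.mem_cons.1 hu with rfl | hu
    · exact ha
    · exact chain_closed hcl (List.head?_cons) (hcl _ hc.1 ha) hc.2 u hu

lemma foldr_min_le : ∀ {A : List ℕ∞} {c : ℕ∞}, c ∈ A → A.foldr min ⊤ ≤ c
  | a :: A, c, h => by
    rcases List.mem_cons.1 h with rfl | h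
    · exact min_le_left _ _
    · exact le_trans (min_le_right _ _) (foldr_min_le h)

lemma foldr_min_init : ∀ (A : List ℕ∞) (b : ℕ∞), A.foldr min b = min (A.foldr min ⊤) b
  | [], b => by simp
  | a :: A, b => by
    simp only [List.foldr_cons, foldr_min_init A b]
    rw [← min_assoc]

lemma strength_le {w : V × V → ℕ} {l : List V} {p : V × V} (h : p ∈ l.zip l.tail) :
    strength w l ≤ (w p : ℕ∞) :=
  foldr_min_le (List.mem_map_of_mem h)

lemma strength_singleton (w : V × V → ℕ) (x : V) : strength w [x] = ⊤ := by
  simp [strength]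

lemma zip_tail_concat : ∀ {l : List V} {x : V} (y : V), l.getLast? = some x →
    (l ++ [y]).zip (l ++ [y]).tail = l.zip l.tail ++ [(x, y)]
  | [], x, y, h => by simp at h
  | [a], x, y, h => by simp at h; subst h; simp
  | a :: b :: t, x, y, h => by
    have ih := zip_tail_concat (l := b :: t) y (by rwa [List.getLast?_cons_cons] at h)
    simp only [List.cons_append, List.tail_cons, List.zip_cons_cons] at ih ⊢
    rw [ih]

lemma strength_concat {w : V × V → ℕ} {l : List V} {x : V} (y : V)
    (h : l.getLast? = some x) :
    strength w (l ++ [y]) = min (strength w l) (w (x, y) : ℕ∞) := by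
  unfold strength
  rw [zip_tail_concat y h, List.map_append, List.foldr_append]
  simp only [List.map_cons, List.map_nil, List.foldr_cons, List.foldr_nil]
  rw [foldr_min_init]
  congr 1

lemma exists_crossing {S : Finset V} :
    ∀ {l : List V} {a v : V}, l.head? = some a → l.getLast? = some v → a ∈ S → v ∉ S →
      ∃ p ∈ l.zip l.tail, p.1 ∈ S ∧ p.2 ∉ S
  | [], a, v, ha, hv, _, _ => by simp at ha
  | [x], a, v, ha, hv, haS, hvS => by
    simp at ha hv; subst ha; subst hv; exact absurd haS hvS
  | x :: b :: t, a, v, ha, hv, haS, hvS => by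
    simp only [List.head?_cons, Option.some.injEq] at ha
    subst ha
    by_cases hb : b ∈ S
    · obtain ⟨p, hp, hp1, hp2⟩ := exists_crossing (l := b :: t) (List.head?_cons)
        (by rwa [List.getLast?_cons_cons] at hv) hb hvS
      refine ⟨p, ?_, hp1, hp2⟩
      simp only [List.tail_cons] at hp
      simp only [List.tail_cons, List.zip_cons_cons, List.mem_cons]
      exact Or.inr hp
    · exact ⟨(x, b), by simp, haS, hb⟩

lemma path_mono {D D' : Finset (V × V)} (hDD : ∀ f ∈ D, f ∈ D') {l : List V} {a b : V}
    (h : IsPathFrom D l a b) : IsPathFrom D' l a b :=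
  ⟨h.1, h.2.1, h.2.2.1, h.2.2.2.1, h.2.2.2.2.imp (fun _ _ hpq => hDD _ hpq)⟩

lemma path_singleton {D : Finset (V × V)} {l : List V} {x : V}
    (h : IsPathFrom D l x x) : l = [x] := by
  obtain ⟨hne, hnd, hh, hl, _⟩ := h
  cases l with
  | nil => exact absurd rfl hne
  | cons c t =>
    simp only [List.head?_cons, Option.some.injEq] at hh
    subst hh
    cases t with
    | nil => rfl
    | cons d t' =>
      rw [List.getLast?_cons_cons] at hl
      exact absurd (mem_of_getLast? hl) (List.nodup_cons.1 hnd).1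

lemma path_empty {l : List V} {a b : V}
    (h : IsPathFrom (∅ : Finset (V × V)) l a b) : l = [a] ∧ b = a := by
  obtain ⟨hne, hnd, hh, hl, hc⟩ := h
  cases l with
  | nil => simp at hh
  | cons c t =>
    simp only [List.head?_cons, Option.some.injEq] at hh
    subst hh
    cases t with
    | nil => refine ⟨rfl, ?_⟩; simp at hl; first | exact hl | exact hl.symm
    | cons d t' =>
      rw [List.Chain', List.isChain_cons_cons] at hc
      exact absurd hc.1 (Finset.notMem_empty _)

lemma path_snoc {D : Finset (V × V)} {l : List V} {x y : V} (h : IsPathFrom D l x y)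
    (hlen : 2 ≤ l.length) :
    ∃ l₀ p, l = l₀ ++ [y] ∧ l₀.getLast? = some p ∧ (p, y) ∈ D ∧ IsPathFrom D l₀ x p := by
  obtain ⟨hne, hnd, hh, hl, hc⟩ := h
  have hl' : l.dropLast ++ [y] = l := List.dropLast_append_getLast? y hl
  have hd : l.dropLast ≠ [] := by
    have : l.dropLast.length = l.length - 1 := List.length_dropLast
    intro h0; rw [h0] at this; simp at this; omega
  obtain ⟨p, hp⟩ : ∃ p, l.dropLast.getLast? = some p := by
    cases hdl : l.dropLast.getLast? with
    | none => exact absurd (List.getLast?_eq_none_iff.1 hdl) hd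
    | some p => exact ⟨p, rfl⟩
  rw [← hl'] at hc hnd hh
  rw [List.Chain', List.isChain_append] at hc
  refine ⟨l.dropLast, p, hl'.symm, hp, ?_, hd, hnd.sublist (List.sublist_append_left _ _),
    by rwa [List.head?_append_of_ne_nil _ hd] at hh, hp, hc.1⟩
  exact hc.2.2 p hp y rfl

lemma path_insert_decomp {D : Finset (V × V)} {e : V × V} {l : List V} {a b : V}
    (h : IsPathFrom (insert e D) l a b)
    (hT1 : ∀ f ∈ D, f.1 ≠ e.2) (hT2 : ∀ f ∈ D, f.2 ≠ e.2) (hne : e.1 ≠ e.2) :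
    IsPathFrom D l a b ∨ (l = [e.2] ∧ a = e.2 ∧ b = e.2) ∨
      (b = e.2 ∧ ∃ l₀, l = l₀ ++ [e.2] ∧ IsPathFrom D l₀ a e.1) := by
  obtain ⟨hne', hnd, hh, hl, hc⟩ := h
  by_cases hy : e.2 ∈ l
  · right
    obtain ⟨l₁, l₂, rfl⟩ := List.append_of_mem hy
    have hl₂ : l₂ = [] := by
      cases l₂ with
      | nil => rfl
      | cons c t =>
        exfalso
        have hc2 := (List.isChain_append.1 hc).2.1
        rw [List.isChain_cons_cons] at hc2
        rcases Finset.mem_insert.1 hc2.1 with h' | h'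
        · exact hne (congrArg Prod.fst h').symm
        · exact hT1 _ h' rfl
    subst hl₂
    have hb : b = e.2 := by
      rw [List.getLast?_concat] at hl
      exact (Option.some.injEq _ _ ▸ hl).symm
    have he2l₁ : e.2 ∉ l₁ := by
      have := (List.nodup_append.1 hnd).2.2
      intro hmem; exact this _ hmem _ (by simp) rfl
    cases hl₁ : l₁ with
    | nil =>
      subst hl₁
      simp only [List.nil_append, List.head?_cons, Option.some.injEq] at hh
      exact Or.inl ⟨rfl, hh.symm, hb⟩
    | cons c t =>
      right
      subst hl₁
      refine ⟨hb, c :: t, rfl, ?_⟩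
      have hc' := List.isChain_append.1 hc
      obtain ⟨p, hp⟩ : ∃ p, (c :: t).getLast? = some p := by
        cases hq : (c :: t).getLast? with
        | none => simp [List.getLast?_eq_none_iff] at hq
        | some p => exact ⟨p, rfl⟩
      have hrel := hc'.2.2 p hp e.2 rfl
      have hpe : p = e.1 := by
        rcases Finset.mem_insert.1 hrel with h' | h'
        · exact congrArg Prod.fst h'
        · exact absurd (rfl : (p, e.2).2 = e.2) (hT2 (p, e.2) h')
      have hchain : (c :: t).Chain' fun p q => (p, q) ∈ D := by
        refine chain'_of_rel (fun q hq => ?_)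
        have hmem := rel_of_chain' hc'.1 q hq
        rcases Finset.mem_insert.1 hmem with h' | h'
        · exact absurd (h' ▸ snd_mem_of_zip hq) he2l₁
        · exact h'
      refine ⟨by simp, (List.nodup_append.1 hnd).1,
        by rwa [List.head?_append_of_ne_nil _ (by simp)] at hh, hpe ▸ hp, hchain⟩
  · left
    refine ⟨hne', hnd, hh, hl, chain'_of_rel (fun q hq => ?_)⟩
    have hmem := rel_of_chain' hc q hq
    rcases Finset.mem_insert.1 hmem with h' | h'
    · exact absurd (h' ▸ snd_mem_of_zip hq) hy
    · exact h'

lemma path_start_cases {D : Finset (V × V)} {l : List V} {a b : V}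
    (h : IsPathFrom D l a b) : a = b ∨ ∃ c, (a, c) ∈ D := by
  obtain ⟨hne, _, hh, hl, hc⟩ := h
  cases l with
  | nil => exact absurd rfl hne
  | cons c t =>
    simp only [List.head?_cons, Option.some.injEq] at hh
    subst hh
    cases t with
    | nil => left; simp at hl; first | exact hl | exact hl.symm
    | cons d t' =>
      rw [List.Chain', List.isChain_cons_cons] at hc
      exact Or.inr ⟨d, hc.1⟩

lemma path_unique {D : Finset (V × V)} {s : V}
    (hdeg : ∀ f g, f ∈ D → g ∈ D → f.2 = g.2 → f = g) :
    ∀ (n : ℕ) {l l' : List V} {v : V}, l.length ≤ n →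
      IsPathFrom D l s v → IsPathFrom D l' s v → l = l' := by
  intro n
  induction n with
  | zero =>
    intro l l' v hlen h h'
    cases l with
    | nil => exact absurd rfl h.1
    | cons c t => simp at hlen
  | succ n ih =>
    intro l l' v hlen h h'
    by_cases hv : v = s
    · subst hv; rw [path_singleton h, path_singleton h']
    · have hlen2 : 2 ≤ l.length := by
        rcases l with _ | ⟨c, _ | ⟨d, t⟩⟩
        · exact absurd rfl h.1
        · exfalso
          have hh := h.2.2.1; have hg := h.2.2.2.1
          simp at hh hg; exact hv (hg ▸ hh ▸ rfl)
        · simp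
      have hlen2' : 2 ≤ l'.length := by
        rcases l' with _ | ⟨c, _ | ⟨d, t⟩⟩
        · exact absurd rfl h'.1
        · exfalso
          have hh := h'.2.2.1; have hg := h'.2.2.2.1
          simp at hh hg; exact hv (hg ▸ hh ▸ rfl)
        · simp
      obtain ⟨l₀, p, rfl, hp, hpv, hpath⟩ := path_snoc h hlen2
      obtain ⟨l₀', p', rfl, hp', hpv', hpath'⟩ := path_snoc h' hlen2'
      have hpp : p = p' := congrArg Prod.fst (hdeg _ _ hpv hpv' rfl)
      subst hpp
      have : l₀ = l₀' := ih (by simp at hlen ⊢; omega) hpath hpath'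
      rw [this]

end PrimAux

namespace PrimAux

lemma prim_invariant {V : Type*} {E : Finset (V × V)} {w : V × V → ℕ} {s : V}
    {S : Finset V} {T : Finset (V × V)} (hrun : PrimRun E w s S T) :
    s ∈ S ∧ (∀ f ∈ T, f ∈ E) ∧ (∀ f ∈ T, f.1 ∈ S ∧ f.2 ∈ S) ∧
    (∀ f ∈ T, f.2 ≠ s) ∧ (∀ f g, f ∈ T → g ∈ T → f.2 = g.2 → f = g) ∧
    (∀ v ∈ S, ∃ l, IsPathFrom T l s v) ∧
    (∀ a b l, IsPathFrom T l a b → ∀ l', IsPathFrom E l' a b →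
      strength w l' ≤ strength w l) ∧
    (∀ a b l, IsPathFrom T l a b → ∀ v, v ∉ S → ∀ l', IsPathFrom E l' a v →
      strength w l' ≤ strength w l) := by
  induction hrun with
  | init =>
    refine ⟨Finset.mem_singleton_self s, by simp, by simp, by simp, by simp, ?_, ?_, ?_⟩
    · intro v hv
      rw [Finset.mem_singleton] at hv
      exact ⟨[v], by simp, by simp, by simp [hv], rfl, List.isChain_singleton v⟩
    · intro a b l hl l' hl'
      obtain ⟨rfl, rfl⟩ := path_empty hl
      rw [strength_singleton]
      exact le_top
    · intro a b l hl v hv l' hl'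
      obtain ⟨rfl, rfl⟩ := path_empty hl
      rw [strength_singleton]
      exact le_top
  | @step S T e he h1 h2 hmax hrun ih =>
    obtain ⟨hs, hA1, hA2, hA3, hA4, hA5, hP6, hP7⟩ := ih
    have hy1 : ∀ f ∈ T, f.1 ≠ e.2 := fun f hf h => h2 (h ▸ (hA2 f hf).1)
    have hy2 : ∀ f ∈ T, f.2 ≠ e.2 := fun f hf h => h2 (h ▸ (hA2 f hf).2)
    have hne12 : e.1 ≠ e.2 := fun h => h2 (h ▸ h1)
    have hcl : ∀ f ∈ T, f.1 ∈ S → f.2 ∈ S := fun f hf _ => (hA2 f hf).2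
    have hstart : ∀ a b l, IsPathFrom T l a b → b ∈ S → a ∈ S := by
      intro a b l hl hb
      rcases path_start_cases hl with rfl | ⟨c, hc⟩
      · exact hb
      · exact (hA2 _ hc).1
    have hcross : ∀ (a v : V) (l' : List V), a ∈ S → v ∉ S → IsPathFrom E l' a v →
        strength w l' ≤ (w e : ℕ∞) := by
      intro a v l' haS hvS hl'
      obtain ⟨p, hp, hp1, hp2⟩ := exists_crossing hl'.2.2.1 hl'.2.2.2.1 haS hvS
      have hpE : p ∈ E := rel_of_chain' hl'.2.2.2.2 p hp
      calc strength w l' ≤ (w p : ℕ∞) := strength_le hp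
        _ ≤ (w e : ℕ∞) := Nat.cast_le.2 (hmax p hpE hp1 hp2)
    have hkey : ∀ (a v : V) (l₀ l' : List V), IsPathFrom T l₀ a e.1 → v ∉ S →
        IsPathFrom E l' a v → strength w l' ≤ strength w (l₀ ++ [e.2]) := by
      intro a v l₀ l' hl₀ hv hl'
      have haS : a ∈ S := hstart a e.1 l₀ hl₀ h1
      have hs1 : strength w l' ≤ strength w l₀ := hP7 a e.1 l₀ hl₀ v hv l' hl'
      have hs2 : strength w l' ≤ (w e : ℕ∞) := hcross a v l' haS hv hl'
      rw [strength_concat e.2 hl₀.2.2.2.1, Prod.mk.eta]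
      exact le_min hs1 hs2
    refine ⟨Finset.mem_insert_of_mem hs, ?_, ?_, ?_, ?_, ?_, ?_, ?_⟩
    · intro f hf
      rcases Finset.mem_insert.1 hf with rfl | hf
      · exact he
      · exact hA1 f hf
    · intro f hf
      rcases Finset.mem_insert.1 hf with rfl | hf
      · exact ⟨Finset.mem_insert_of_mem h1, Finset.mem_insert_self _ _⟩
      · exact ⟨Finset.mem_insert_of_mem (hA2 f hf).1,
          Finset.mem_insert_of_mem (hA2 f hf).2⟩
    · intro f hf
      rcases Finset.mem_insert.1 hf with rfl | hf
      · exact fun h => h2 (h ▸ hs)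
      · exact hA3 f hf
    · intro f g hf hg hfg
      rcases Finset.mem_insert.1 hf with hfe | hf
      · rcases Finset.mem_insert.1 hg with hge | hg
        · rw [hfe, hge]
        · exact absurd (hfg ▸ (hA2 g hg).2) (hfe ▸ h2)
      · rcases Finset.mem_insert.1 hg with hge | hg
        · exact absurd (hfg.symm ▸ (hA2 f hf).2) (hge ▸ h2)
        · exact hA4 f g hf hg hfg
    · intro v hv
      rcases Finset.mem_insert.1 hv with hve | hv
      · obtain ⟨l₀, hl₀⟩ := hA5 e.1 h1
        have hl₀S : ∀ u ∈ l₀, u ∈ S := chain_closed hcl hl₀.2.2.1 hs hl₀.2.2.2.2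
        have he2 : e.2 ∉ l₀ := fun hmem => h2 (hl₀S e.2 hmem)
        refine ⟨l₀ ++ [e.2], by simp, ?_, ?_, by rw [List.getLast?_concat, hve], ?_⟩
        · exact List.nodup_append.2 ⟨hl₀.2.1, List.nodup_singleton e.2,
            fun u hu v hv huv => (by simp at hv; subst hv; subst huv; exact he2 hu)⟩
        · rw [List.head?_append_of_ne_nil _ hl₀.1]; exact hl₀.2.2.1
        · refine List.isChain_append.2 ⟨hl₀.2.2.2.2.imp (fun _ _ h => Finset.mem_insert_of_mem h),
            List.isChain_singleton e.2, ?_⟩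
          intro x hx y hy
          rw [hl₀.2.2.2.1] at hx
          simp only [Option.mem_def, Option.some.injEq, List.head?_cons] at hx hy
          subst hx; subst hy
          exact Prod.mk.eta ▸ Finset.mem_insert_self e _
      · obtain ⟨l, hl⟩ := hA5 v hv
        exact ⟨l, path_mono (fun f hf => Finset.mem_insert_of_mem hf) hl⟩
    · intro a b l hl l' hl'
      rcases path_insert_decomp hl hy1 hy2 hne12 with hT | ⟨rfl, rfl, rfl⟩ |
        ⟨rfl, l₀, rfl, hl₀⟩
      · exact hP6 a b l hT l' hl'
      · rw [strength_singleton]; exact le_top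
      · exact hkey a e.2 l₀ l' hl₀ h2 hl'
    · intro a b l hl v hv l' hl'
      have hvS : v ∉ S := fun h => hv (Finset.mem_insert_of_mem h)
      rcases path_insert_decomp hl hy1 hy2 hne12 with hT | ⟨rfl, rfl, rfl⟩ |
        ⟨rfl, l₀, rfl, hl₀⟩
      · exact hP7 a b l hT v hvS l' hl'
      · rw [strength_singleton]; exact le_top
      · exact hkey a v l₀ l' hl₀ hvS hl'

end PrimAux

/-- Let `G = (V, E)` be a finite weighted directed graph with weight
function `w : E → ℕ` and let `s` have a path in `G` to every vertex. Then every possible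
output `T` of the directed Prim algorithm started at `s` is a recursively strongest path
tree of `G` rooted at `s`: it is a rooted tree with root `s`, and whenever `u` precedes
`v` in `T`, the unique tree path from `u` to `v` is a recursive strongest path in `G`
(every contiguous subpath of it is a strongest path in `G`). -/
theorem directed_prim_output_is_recursively_strongest_path_tree
    {V : Type*} [Fintype V] (E : Finset (V × V)) (w : V × V → ℕ) (s : V)
    (hreach : ∀ v : V, Reach E s v)
    (T : Finset (V × V)) (hT : IsPrimOutput E w s T) :
    IsRootedTree T s ∧
      ∀ (u v : V) (l : List V), IsPathFrom T l u v →
        ∀ (l₁ l₂ l₃ : List V) (a b : V), l = l₁ ++ l₂ ++ l₃ →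
          l₂.head? = some a → l₂.getLast? = some b → IsStrongestPath E w l₂ a b := by
  obtain ⟨S, hrun, hclosed⟩ := hT
  obtain ⟨hs, hA1, hA2, hA3, hA4, hA5, hP6, hP7⟩ := PrimAux.prim_invariant hrun
  have hSuniv : ∀ v : V, v ∈ S := by
    intro v
    obtain ⟨lr, hlr⟩ := hreach v
    exact PrimAux.chain_closed hclosed hlr.2.2.1 hs hlr.2.2.2.2 v
      (PrimAux.mem_of_getLast? hlr.2.2.2.1)
  constructor
  · refine ⟨?_, hA3, hA4⟩
    intro v
    obtain ⟨l, hl⟩ := hA5 v (hSuniv v)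
    exact ⟨l, hl, fun l' hl' => PrimAux.path_unique hA4 l'.length le_rfl hl' hl⟩
  · intro u v l hl l₁ l₂ l₃ a b hsplit ha hb
    have hl₂ : IsPathFrom T l₂ a b := by
      subst hsplit
      obtain ⟨hne, hnd, hh, hlst, hc⟩ := hl
      refine ⟨fun h0 => by rw [h0] at ha; simp at ha, ?_, ha, hb, ?_⟩
      · exact hnd.sublist ((List.sublist_append_right l₁ l₂).trans
          (List.sublist_append_left _ l₃))
      · exact ((List.isChain_append.1 ((List.isChain_append.1 hc).1)).2.1)
    exact ⟨PrimAux.path_mono hA1 hl₂, fun l' hl' => hP6 a b l₂ hl₂ l' hl'⟩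
end

section
/- Let G = (V,E) be a finite weighted directed graph with weight function w : E → ℕ, and let s ∈ V have a path in G to every other vertex of V. Then there exists a rooted tree T on V with root s and E(T) ⊆ E such that whenever there is a path from u to v in T, that unique path is a recursive strongest path in G. -/
attribute [local instance] Classical.propDecidable

section RSPAux
open List
variable {V : Type*}


lemma chain'_pair {R : V → V → Prop} : ∀ {l : List V} {a b : V},
    l.Chain' R → (a, b) ∈ l.zip l.tail → R a b
  | [], _, _, _, h => by simp at h
  | [_], _, _, _, h => by simp at h
  | c :: d :: t, a, b, hc, h => by
    rw [show (c :: d :: t).zip (c :: d :: t).tail = (c, d) :: (d :: t).zip t from rfl] at h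
    rcases List.mem_cons.1 h with h | h
    · cases h; exact List.isChain_cons_cons.1 hc |>.1
    · exact chain'_pair (List.isChain_cons_cons.1 hc).2 h

lemma mem_zip_tail_of_split {a b : V} : ∀ (l₁ : List V) (l₂ : List V),
    (a, b) ∈ (l₁ ++ a :: b :: l₂).zip (l₁ ++ a :: b :: l₂).tail
  | [], l₂ => by
      show (a, b) ∈ (a, b) :: ((b :: l₂).zip l₂)
      exact List.mem_cons_self
  | [c], l₂ => by
      show (a, b) ∈ (c, a) :: ((a :: b :: l₂).zip (a :: b :: l₂).tail)
      exact List.mem_cons_of_mem _ (mem_zip_tail_of_split [] l₂)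
  | c :: d :: t, l₂ => by
      rw [show (((c :: d :: t) ++ a :: b :: l₂).zip ((c :: d :: t) ++ a :: b :: l₂).tail)
        = (c, d) :: (((d :: t) ++ a :: b :: l₂).zip ((d :: t) ++ a :: b :: l₂).tail) from rfl]
      exact List.mem_cons_of_mem _ (mem_zip_tail_of_split (d :: t) l₂)

lemma split_of_mem_zip_tail {a b : V} : ∀ {l : List V},
    (a, b) ∈ l.zip l.tail → ∃ l₁ l₂, l = l₁ ++ a :: b :: l₂
  | [], h => by simp at h
  | [_], h => by simp at h
  | c :: d :: t, h => by
    rw [show (c :: d :: t).zip (c :: d :: t).tail = (c, d) :: (d :: t).zip t from rfl] at h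
    rcases List.mem_cons.1 h with h | h
    · obtain ⟨h1, h2⟩ := Prod.mk.injEq .. ▸ h
      exact ⟨[], t, by simp [← h1, ← h2]⟩
    · obtain ⟨l₁, l₂, hl⟩ := split_of_mem_zip_tail h
      exact ⟨c :: l₁, l₂, by simp [hl]⟩

lemma foldr_min_le : ∀ (L : List ℕ∞) (x : ℕ∞), x ∈ L → L.foldr min ⊤ ≤ x
  | [], x, h => by simp at h
  | a :: t, x, h => by
    rcases List.mem_cons.1 h with rfl | h
    · exact min_le_left _ _
    · exact le_trans (min_le_right _ _) (foldr_min_le t x h)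

lemma foldr_min_attained : ∀ (L : List ℕ∞), L ≠ [] → ∃ x ∈ L, L.foldr min ⊤ = x
  | [], h => absurd rfl h
  | [a], _ => ⟨a, List.mem_singleton_self a, by simp⟩
  | a :: b :: t, _ => by
    obtain ⟨x, hx, he⟩ := foldr_min_attained (b :: t) (by simp)
    rcases min_cases a ((b :: t).foldr min ⊤) with ⟨h1, _⟩ | ⟨h1, _⟩
    · exact ⟨a, List.mem_cons_self, h1⟩
    · exact ⟨x, List.mem_cons_of_mem _ hx, by rw [List.foldr_cons, h1, he]⟩

lemma crossing {S' : Finset V} : ∀ {l : List V} {u v : V},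
    l.head? = some u → l.getLast? = some v → u ∈ S' → v ∉ S' →
    ∃ l₁ a b l₂, l = l₁ ++ a :: b :: l₂ ∧ a ∈ S' ∧ b ∉ S'
  | [], u, v, h, _, _, _ => by simp at h
  | [c], u, v, hh, hl, hu, hv => by
    simp only [head?_cons, Option.some_inj] at hh
    simp only [getLast?_singleton, Option.some_inj] at hl
    exact absurd (hh ▸ hu) (hl ▸ hv)
  | c :: d :: t, u, v, hh, hl, hu, hv => by
    simp only [head?_cons, Option.some_inj] at hh
    subst hh
    by_cases hd : d ∈ S'
    · obtain ⟨l₁, a, b, l₂, h1, h2, h3⟩ :=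
        crossing (l := d :: t) rfl (by rw [← hl]; rfl) hd hv
      exact ⟨c :: l₁, a, b, l₂, by rw [h1]; rfl, h2, h3⟩
    · exact ⟨[], c, d, t, rfl, hu, hd⟩



lemma mem_of_getLast?' {l : List V} {v : V} (h : l.getLast? = some v) : v ∈ l := by
  cases l with
  | nil => simp at h
  | cons a t =>
    rw [getLast?_eq_getLast_of_ne_nil (by simp)] at h
    exact (Option.some_inj.1 h) ▸ List.getLast_mem _

lemma eq_single {l : List V} {x : V} (hnd : l.Nodup) (hh : l.head? = some x)
    (hg : l.getLast? = some x) : l = [x] := by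
  match l with
  | [] => simp at hh
  | [a] => simp_all
  | a :: b :: t =>
    simp only [head?_cons, Option.some_inj] at hh
    rw [getLast?_cons_cons] at hg
    have hx : x ∈ b :: t := mem_of_getLast?' hg
    rw [hh] at hnd
    exact absurd hx (List.nodup_cons.1 hnd).1

lemma path_mem_S {T : Finset (V × V)} {S : Finset V}
    (hT : ∀ f ∈ T, f.1 ∈ S ∧ f.2 ∈ S) :
    ∀ {l : List V}, l.Chain' (fun a b => (a, b) ∈ T) → (∀ u ∈ l.head?, u ∈ S) →
      ∀ x ∈ l, x ∈ S
  | [], _, _, x, hx => by simp at hx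
  | [a], _, hh, x, hx => by
    simp only [mem_singleton] at hx
    exact hx ▸ hh a rfl
  | a :: b :: t, hc, hh, x, hx => by
    obtain ⟨h1, h2⟩ := List.isChain_cons_cons.1 hc
    rcases List.mem_cons.1 hx with rfl | hx
    · exact hh x rfl
    · exact path_mem_S hT h2 (fun u hu => by
        simp only [head?_cons, Option.mem_def, Option.some_inj] at hu
        exact hu ▸ (hT _ h1).2) x hx

lemma path_all_mem {T : Finset (V × V)} {S : Finset V}
    (hT : ∀ f ∈ T, f.1 ∈ S ∧ f.2 ∈ S) {l : List V} {u v : V}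
    (h : IsPathFrom T l u v) (hv : v ∈ S) : ∀ x ∈ l, x ∈ S := by
  obtain ⟨hne, hnd, hh, hg, hc⟩ := h
  match l with
  | [a] =>
    intro x hx
    simp only [mem_singleton] at hx
    subst hx
    simp only [getLast?_singleton, Option.some_inj] at hg
    exact hg ▸ hv
  | a :: b :: t =>
    have ha : a ∈ S := (hT _ (List.isChain_cons_cons.1 hc).1).1
    exact path_mem_S hT hc (fun x hx => by
      simp only [head?_cons, Option.mem_def, Option.some_inj] at hx
      exact hx ▸ ha)

lemma path_last_mem {T : Finset (V × V)} {S : Finset V}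
    (hT : ∀ f ∈ T, f.1 ∈ S ∧ f.2 ∈ S) {l : List V} {u v : V}
    (h : IsPathFrom T l u v) (hu : u ∈ S) : v ∈ S := by
  obtain ⟨hne, hnd, hh, hg, hc⟩ := h
  exact path_mem_S hT hc (fun x hx => by
    rw [hh] at hx
    exact (Option.some_inj.1 (Option.mem_def.1 hx)) ▸ hu) v (mem_of_getLast?' hg)

lemma last_eq_of_mem {T : Finset (V × V)} {e : V × V} (hne : e.1 ≠ e.2)
    (hT : ∀ f ∈ T, f.1 ≠ e.2) :
    ∀ {l : List V}, l.Chain' (fun a b => (a, b) ∈ insert e T) → e.2 ∈ l →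
      l.getLast? = some e.2
  | [], _, h => by simp at h
  | [a], _, h => by
    simp only [mem_singleton] at h
    simp [h]
  | a :: b :: t, hc, h => by
    by_cases hm : e.2 ∈ b :: t
    · rw [getLast?_cons_cons]
      exact last_eq_of_mem hne hT (List.isChain_cons_cons.1 hc).2 hm
    · have ha : a = e.2 := by
        rcases List.mem_cons.1 h with h' | h'
        · exact h'.symm
        · exact absurd h' hm
      subst ha
      have h1 : (e.2, b) ∈ insert e T := (List.isChain_cons_cons.1 hc).1
      rcases Finset.mem_insert.1 h1 with h2 | h2
      · exact absurd (congrArg Prod.fst h2).symm hne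
      · exact absurd rfl (hT _ h2)

lemma chain_sub {T : Finset (V × V)} {e : V × V} :
    ∀ {l : List V}, l.Chain' (fun a b => (a, b) ∈ insert e T) → e.2 ∉ l →
      l.Chain' (fun a b => (a, b) ∈ T)
  | [], _, _ => List.isChain_nil
  | [a], _, _ => List.isChain_singleton a
  | a :: b :: t, hc, hm => by
    obtain ⟨h1, h2⟩ := List.isChain_cons_cons.1 hc
    refine List.isChain_cons_cons.2 ⟨?_, chain_sub h2 (fun h => hm (List.mem_cons_of_mem _ h))⟩
    rcases Finset.mem_insert.1 h1 with h | h
    · exact absurd (by rw [← (congrArg Prod.snd h : b = e.2)]; exact List.mem_cons_of_mem _ (List.mem_cons_self)) hm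
    · exact h

lemma path_insert_cases {S : Finset V} {T : Finset (V × V)} {e : V × V}
    (hT : ∀ f ∈ T, f.1 ∈ S ∧ f.2 ∈ S) (hx : e.1 ∈ S) (hy : e.2 ∉ S)
    {l : List V} {u v : V} (hl : IsPathFrom (insert e T) l u v) :
    IsPathFrom T l u v ∨
      (v = e.2 ∧ ∃ l₀, l = l₀ ++ [e.2] ∧ IsPathFrom T l₀ u e.1) := by
  obtain ⟨hne, hnd, hh, hg, hc⟩ := hl
  by_cases hm : e.2 ∈ l
  · have hxy : e.1 ≠ e.2 := fun h => hy (h ▸ hx)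
    have hT1 : ∀ f ∈ T, f.1 ≠ e.2 := fun f hf h => hy (h ▸ (hT f hf).1)
    have hlast := last_eq_of_mem hxy hT1 hc hm
    have hv : v = e.2 := by
      rw [hg] at hlast
      exact Option.some_inj.1 hlast
    match l, hm with
    | [a], hm =>
      simp only [mem_singleton] at hm
      subst hm
      simp only [head?_cons, Option.some_inj] at hh
      exact Or.inl ⟨hne, hnd, by rw [← hh]; rfl, hg, List.isChain_singleton _⟩
    | a :: b :: t, _ =>
      right
      refine ⟨hv, ?_⟩
      set l : List V := a :: b :: t with hldef
      have hlne : l ≠ [] := by simp [hldef]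
      have hsplit : l = l.dropLast ++ [e.2] := by
        conv_lhs => rw [← List.dropLast_append_getLast hlne]
        rw [getLast?_eq_getLast_of_ne_nil hlne] at hlast
        rw [Option.some_inj.1 hlast]
      have hdne : l.dropLast ≠ [] := by simp [hldef]
      have hnotmem : e.2 ∉ l.dropLast := by
        have := hsplit ▸ hnd
        have h2 := List.disjoint_of_nodup_append this
        exact fun h => h2 h (List.mem_singleton_self _)
      have hchain : l.dropLast.Chain' (fun a b => (a, b) ∈ insert e T) :=
        hc.prefix ⟨[e.2], hsplit.symm⟩
      have hlastd : l.dropLast.getLast? = some e.1 := by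
        rw [getLast?_eq_getLast_of_ne_nil hdne]
        have hcc : (l.dropLast.getLast hdne, e.2) ∈ insert e T := by
          have := hsplit ▸ hc
          have h3 := (List.isChain_append.1 this).2.2
          exact h3 _ (by rw [getLast?_eq_getLast_of_ne_nil hdne]; rfl) e.2 rfl
        rcases Finset.mem_insert.1 hcc with h | h
        · exact congrArg some (congrArg Prod.fst h)
        · exact absurd (hT _ h).2 hy
      refine ⟨l.dropLast, hsplit, hdne, hnd.sublist (List.dropLast_sublist l),
        ?_, hlastd, chain_sub hchain hnotmem⟩
      rw [← hh]
      conv_rhs => rw [hsplit]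
      rw [head?_append_of_ne_nil _ hdne]
  · exact Or.inl ⟨hne, hnd, hh, hg, chain_sub hc hm⟩


def CutProp (E : Finset (V × V)) (w : V × V → ℕ) (S : Finset V) (T : Finset (V × V)) : Prop :=
  ∀ u v l, IsPathFrom T l u v → ∀ l₁ a b l₂, l = l₁ ++ a :: b :: l₂ →
    ∃ S' : Finset V, S' ⊆ S ∧ (∀ x ∈ l₁, x ∈ S') ∧ a ∈ S' ∧ b ∉ S' ∧
      (∀ x ∈ l₂, x ∉ S') ∧ ∀ f ∈ E, f.1 ∈ S' → f.2 ∉ S' → w f ≤ w (a, b)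

def Good (E : Finset (V × V)) (w : V × V → ℕ) (s : V) (S : Finset V)
    (T : Finset (V × V)) : Prop :=
  s ∈ S ∧ T ⊆ E ∧ (∀ f ∈ T, f.1 ∈ S ∧ f.2 ∈ S ∧ f.2 ≠ s) ∧
    (∀ e f, e ∈ T → f ∈ T → e.2 = f.2 → e = f) ∧
    (∀ v ∈ S, ∃! l, IsPathFrom T l s v) ∧ CutProp E w S T

lemma good_base {E : Finset (V × V)} {w : V × V → ℕ} {s : V} :
    Good E w s {s} ∅ := by
  refine ⟨Finset.mem_singleton_self s, Finset.empty_subset E, by simp, by simp, ?_, ?_⟩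
  · intro v hv
    rw [Finset.mem_singleton] at hv
    subst hv
    refine ⟨[v], ⟨by simp, by simp, rfl, rfl, List.isChain_singleton _⟩, ?_⟩
    intro l hl
    exact eq_single hl.2.1 hl.2.2.1 hl.2.2.2.1
  · intro u v l hl l₁ a b l₂ hsp
    have : (a, b) ∈ (∅ : Finset (V × V)) :=
      chain'_pair hl.2.2.2.2 (hsp ▸ mem_zip_tail_of_split l₁ l₂)
    simp at this

lemma good_step [Fintype V] {E : Finset (V × V)} {w : V × V → ℕ} {s : V}
    {S : Finset V} {T : Finset (V × V)} (hg : Good E w s S T) (hS : S ≠ Finset.univ)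
    (hreach : ∀ v, Reach E s v) :
    ∃ e ∈ E, e.1 ∈ S ∧ e.2 ∉ S ∧ Good E w s (insert e.2 S) (insert e T) := by
  obtain ⟨hs, hTE, hTend, hindeg, huniq, hcut⟩ := hg
  have hT2 : ∀ f ∈ T, f.1 ∈ S ∧ f.2 ∈ S := fun f hf => ⟨(hTend f hf).1, (hTend f hf).2.1⟩
  -- a crossing edge exists
  obtain ⟨v0, hv0⟩ : ∃ v, v ∉ S := by
    by_contra h
    push_neg at h
    exact hS (Finset.eq_univ_iff_forall.2 h)
  obtain ⟨lr, hlr⟩ := hreach v0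
  obtain ⟨m₁, c, d, m₂, hm, hcS, hdS⟩ := crossing hlr.2.2.1 hlr.2.2.2.1 hs hv0
  have hcd : (c, d) ∈ E := chain'_pair hlr.2.2.2.2 (hm ▸ mem_zip_tail_of_split m₁ m₂)
  have hne : (E.filter fun f => f.1 ∈ S ∧ f.2 ∉ S).Nonempty :=
    ⟨(c, d), Finset.mem_filter.2 ⟨hcd, hcS, hdS⟩⟩
  obtain ⟨e, he, hemax⟩ := Finset.exists_max_image _ w hne
  obtain ⟨heE, hex, hey⟩ : e ∈ E ∧ e.1 ∈ S ∧ e.2 ∉ S := by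
    have := Finset.mem_filter.1 he
    exact ⟨this.1, this.2.1, this.2.2⟩
  have hmax : ∀ f ∈ E, f.1 ∈ S → f.2 ∉ S → w f ≤ w e := fun f hf h1 h2 =>
    hemax f (Finset.mem_filter.2 ⟨hf, h1, h2⟩)
  refine ⟨e, heE, hex, hey, ?_, ?_, ?_, ?_, ?_, ?_⟩
  · exact Finset.mem_insert_of_mem hs
  · exact Finset.insert_subset heE hTE
  · intro f hf
    rcases Finset.mem_insert.1 hf with rfl | hf
    · exact ⟨Finset.mem_insert_of_mem hex, Finset.mem_insert_self _ _,
        fun h => hey (h ▸ hs)⟩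
    · exact ⟨Finset.mem_insert_of_mem (hTend f hf).1,
        Finset.mem_insert_of_mem (hTend f hf).2.1, (hTend f hf).2.2⟩
  · intro f g hf hg hfg
    rcases Finset.mem_insert.1 hf with hf' | hf' <;> rcases Finset.mem_insert.1 hg with hg' | hg'
    · rw [hf', hg']
    · exfalso; apply hey; rw [← hf', hfg]; exact (hTend g hg').2.1
    · exfalso; apply hey; rw [← hg', ← hfg]; exact (hTend f hf').2.1
    · exact hindeg f g hf' hg' hfg
  · -- unique paths
    intro v hv
    rcases Finset.mem_insert.1 hv with rfl | hv
    · -- v = e.2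
      obtain ⟨lx, hlx, hlxu⟩ := huniq e.1 hex
      have hlxS : ∀ x ∈ lx, x ∈ S := path_all_mem hT2 hlx hex
      have hlxne : lx ≠ [] := hlx.1
      refine ⟨lx ++ [e.2], ⟨by simp, ?_, ?_, ?_, ?_⟩, ?_⟩
      · rw [List.nodup_append]
        exact ⟨hlx.2.1, List.nodup_singleton _,
          fun x hx y hy hxy => hey (by rw [List.mem_singleton.1 hy] at hxy; exact hxy ▸ hlxS x hx)⟩
      · rw [List.head?_append_of_ne_nil _ hlxne]
        exact hlx.2.2.1
      · rw [List.getLast?_append_of_ne_nil _ (by simp)]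
        rfl
      · refine List.isChain_append.2 ⟨hlx.2.2.2.2.imp (fun a b h => Finset.mem_insert_of_mem h),
          List.isChain_singleton _, ?_⟩
        intro x hx y hy
        rw [hlx.2.2.2.1] at hx
        have : x = e.1 := (Option.some_inj.1 (Option.mem_def.1 hx)).symm
        have hy' : y = e.2 := (Option.some_inj.1 (Option.mem_def.1 hy)).symm
        rw [this, hy']
        exact Finset.mem_insert_self _ _
      · intro l' hl'
        rcases path_insert_cases hT2 hex hey hl' with h | ⟨_, l₀, hl₀, hp⟩
        · exact absurd (path_last_mem hT2 h hs) hey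
        · rw [hl₀, hlxu l₀ hp]
    · -- v ∈ S
      obtain ⟨lv, hlv, hlvu⟩ := huniq v hv
      refine ⟨lv, ⟨hlv.1, hlv.2.1, hlv.2.2.1, hlv.2.2.2.1,
        hlv.2.2.2.2.imp (fun a b h => Finset.mem_insert_of_mem h)⟩, ?_⟩
      intro l' hl'
      rcases path_insert_cases hT2 hex hey hl' with h | ⟨hve, _⟩
      · exact hlvu l' h
      · exact absurd (hve ▸ hv) hey
  · -- cut property
    intro u v l hl l₁ a b l₂ hsp
    rcases path_insert_cases hT2 hex hey hl with h | ⟨hve, l₀, hl₀, hp⟩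
    · obtain ⟨S', h1, h2, h3, h4, h5, h6⟩ := hcut u v l h l₁ a b l₂ hsp
      exact ⟨S', h1.trans (Finset.subset_insert _ _), h2, h3, h4, h5, h6⟩
    · rcases l₂.eq_nil_or_concat with rfl | ⟨l₂', d, rfl⟩
      · -- last edge is e
        have hb : b = e.2 := by
          have h2 : (l₁ ++ a :: b :: []).getLast? = (l₀ ++ [e.2]).getLast? := by
            rw [← hsp, ← hl₀]
          rw [List.getLast?_append_cons, List.getLast?_append_of_ne_nil _ (by simp)] at h2
          simpa using h2
        subst hb
        have hpre : l₁ ++ [a] = l₀ := by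
          have h2 : (l₁ ++ [a]) ++ [e.2] = l₀ ++ [e.2] := by
            rw [← hl₀, hsp]
            simp
          exact List.append_cancel_right h2
        have ha : a = e.1 := by
          have h3 : (l₁ ++ [a]).getLast? = some e.1 := by rw [hpre]; exact hp.2.2.2.1
          rw [List.getLast?_append_of_ne_nil _ (by simp)] at h3
          simpa using h3
        have hl₀S : ∀ x ∈ l₀, x ∈ S := path_all_mem hT2 hp hex
        refine ⟨S, Finset.subset_insert _ _, ?_, ?_, hey, by simp, ?_⟩
        · intro x hx
          exact hl₀S x (hpre ▸ List.mem_append_left _ hx)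
        · exact hl₀S a (hpre ▸ List.mem_append_right _ (List.mem_singleton_self _))
        · intro f hf h1 h2
          have hab : (a, e.2) = e := by rw [ha]
          rw [hab]
          exact hmax f hf h1 h2
      · -- edge within l₀
        rw [List.concat_eq_append] at hsp
        have hd : d = e.2 := by
          have h2 : (l₁ ++ a :: b :: (l₂' ++ [d])).getLast? = (l₀ ++ [e.2]).getLast? := by
            rw [← hsp, ← hl₀]
          rw [List.getLast?_append_cons,
            show a :: b :: (l₂' ++ [d]) = (a :: b :: l₂') ++ [d] by simp,
            List.getLast?_append_of_ne_nil _ (by simp),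
            List.getLast?_append_of_ne_nil _ (by simp)] at h2
          simpa using h2
        subst hd
        have hpre : l₁ ++ a :: b :: l₂' = l₀ := by
          have h2 : (l₁ ++ a :: b :: l₂') ++ [e.2] = l₀ ++ [e.2] := by
            rw [← hl₀, hsp]
            simp
          exact List.append_cancel_right h2
        obtain ⟨S', h1, h2, h3, h4, h5, h6⟩ := hcut u e.1 l₀ hp l₁ a b l₂' hpre.symm
        refine ⟨S', h1.trans (Finset.subset_insert _ _), h2, h3, h4, ?_, h6⟩
        intro x hx
        rw [List.concat_eq_append] at hx
        rcases List.mem_append.1 hx with hx | hx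
        · exact h5 x hx
        · rw [List.mem_singleton.1 hx]
          exact fun h => hey (h1 h)

lemma good_univ [Fintype V] {E : Finset (V × V)} {w : V × V → ℕ} {s : V}
    (hreach : ∀ v, Reach E s v) : ∃ T, Good E w s Finset.univ T := by
  suffices h : ∀ n (S : Finset V) T, Good E w s S T → (Finset.univ \ S).card ≤ n →
      ∃ T', Good E w s Finset.univ T' by
    exact h (Finset.univ \ {s}).card {s} ∅ good_base le_rfl
  intro n
  induction n with
  | zero =>
    intro S T hg hc
    have : S = Finset.univ := by
      have h1 : Finset.univ \ S = ∅ := Finset.card_eq_zero.1 (Nat.le_zero.1 hc)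
      have h2 := Finset.sdiff_eq_empty_iff_subset.1 h1
      exact Finset.univ_subset_iff.1 h2
    exact ⟨T, this ▸ hg⟩
  | succ n ih =>
    intro S T hg hc
    by_cases hS : S = Finset.univ
    · exact ⟨T, hS ▸ hg⟩
    · obtain ⟨e, heE, hex, hey, hg'⟩ := good_step hg hS hreach
      refine ih _ _ hg' ?_
      have hsub : Finset.univ \ insert e.2 S ⊆ (Finset.univ \ S).erase e.2 := by
        intro x hx
        rw [Finset.mem_sdiff, Finset.mem_insert] at hx
        push_neg at hx
        exact Finset.mem_erase.2 ⟨hx.2.1, Finset.mem_sdiff.2 ⟨hx.1, hx.2.2⟩⟩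
      have h1 := Finset.card_le_card hsub
      have h2 : e.2 ∈ Finset.univ \ S := Finset.mem_sdiff.2 ⟨Finset.mem_univ _, hey⟩
      rw [Finset.card_erase_of_mem h2] at h1
      omega

lemma strength_le_of_split {w : V × V → ℕ} {l l₁ l₂ : List V} {a b : V}
    (h : l = l₁ ++ a :: b :: l₂) : strength w l ≤ (w (a, b) : ℕ∞) := by
  apply foldr_min_le
  exact List.mem_map_of_mem (h ▸ mem_zip_tail_of_split l₁ l₂)

lemma strongest_of_treepath {E T : Finset (V × V)} {w : V × V → ℕ} {s : V}
    [Fintype V] (hg : Good E w s Finset.univ T) {l : List V} {u v : V}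
    (hl : IsPathFrom T l u v) : IsStrongestPath E w l u v := by
  obtain ⟨_, hTE, _, _, _, hcut⟩ := hg
  have hlE : IsPathFrom E l u v :=
    ⟨hl.1, hl.2.1, hl.2.2.1, hl.2.2.2.1, hl.2.2.2.2.imp (fun a b h => hTE h)⟩
  refine ⟨hlE, ?_⟩
  intro l' hl'
  by_cases hz : l.zip l.tail = []
  · have hT : strength w l = ⊤ := by unfold strength; rw [hz]; rfl
    rw [hT]
    exact le_top
  · obtain ⟨x, hx, hfold⟩ := foldr_min_attained
      ((l.zip l.tail).map fun p => ((w p : ℕ∞)))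
      (fun h => hz (List.map_eq_nil_iff.1 h))
    obtain ⟨⟨pa, pb⟩, hp, rfl⟩ := List.mem_map.1 hx
    obtain ⟨m₁, m₂, hm⟩ := split_of_mem_zip_tail (a := pa) (b := pb) hp
    obtain ⟨S', hS'u, h2, h3, h4, h5, h6⟩ := hcut u v l hl m₁ pa pb m₂ hm
    have huS : u ∈ S' := by
      have hh := hl.2.2.1
      rw [hm] at hh
      match m₁, hh with
      | [], hh => exact (Option.some_inj.1 hh) ▸ h3
      | c :: t, hh =>
        have : c = u := Option.some_inj.1 hh
        exact this ▸ h2 c (List.mem_cons_self)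
    have hvS : v ∉ S' := by
      have hg' := hl.2.2.2.1
      rw [hm, List.getLast?_append_cons, List.getLast?_cons_cons] at hg'
      rcases m₂.eq_nil_or_concat with rfl | ⟨m₂', d, rfl⟩
      · simp only [List.getLast?_singleton, Option.some_inj] at hg'
        exact hg' ▸ h4
      · rw [List.concat_eq_append,
          show pb :: (m₂' ++ [d]) = (pb :: m₂') ++ [d] by simp,
          List.getLast?_append_of_ne_nil _ (by simp)] at hg'
        simp only [List.getLast?_singleton, Option.some_inj] at hg'
        refine hg' ▸ h5 d ?_
        rw [List.concat_eq_append]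
        simp
    obtain ⟨p₁, c, d, p₂, hsp', hcS', hdS'⟩ :=
      crossing hl'.2.2.1 hl'.2.2.2.1 huS hvS
    have hcdE : (c, d) ∈ E := chain'_pair hl'.2.2.2.2 (hsp' ▸ mem_zip_tail_of_split p₁ p₂)
    have hwle : w (c, d) ≤ w (pa, pb) := h6 (c, d) hcdE hcS' hdS'
    calc strength w l' ≤ (w (c, d) : ℕ∞) := strength_le_of_split hsp'
      _ ≤ (w (pa, pb) : ℕ∞) := by exact_mod_cast hwle
      _ = strength w l := by unfold strength; rw [hfold]


end RSPAux

/-- Let `G = (V, E)` be a finite weighted directed graph with weight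
function `w : E → ℕ` and let `s` have a path in `G` to every vertex. Then there exists a
rooted tree `T` on `V` with root `s` and `E(T) ⊆ E` such that every tree path is a
recursive strongest path in `G` (every contiguous subpath of it is a strongest path in
`G`). -/
theorem exists_recursively_strongest_path_tree
    {V : Type*} [Fintype V] (E : Finset (V × V)) (w : V × V → ℕ) (s : V)
    (hreach : ∀ v : V, Reach E s v) :
    ∃ T : Finset (V × V), T ⊆ E ∧ IsRootedTree T s ∧
      ∀ (u v : V) (l : List V), IsPathFrom T l u v →
        ∀ (l₁ l₂ l₃ : List V) (a b : V), l = l₁ ++ l₂ ++ l₃ →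
          l₂.head? = some a → l₂.getLast? = some b → IsStrongestPath E w l₂ a b := by
  obtain ⟨T, hg⟩ := good_univ (w := w) hreach
  obtain ⟨hs, hTE, hTend, hindeg, huniq, hcut⟩ := hg
  refine ⟨T, hTE, ⟨fun v => huniq v (Finset.mem_univ v),
    fun e he => (hTend e he).2.2, hindeg⟩, ?_⟩
  intro u v l hl l₁ l₂ l₃ a b heq hh hg2
  have h2ne : l₂ ≠ [] := fun h => by simp [h] at hh
  have hinf : l₂ <:+: l := ⟨l₁, l₃, by rw [heq]⟩
  have hpath : IsPathFrom T l₂ a b :=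
    ⟨h2ne, List.Nodup.sublist hinf.sublist hl.2.1, hh, hg2, hl.2.2.2.2.infix hinf⟩
  exact strongest_of_treepath ⟨hs, hTE, hTend, hindeg, huniq, hcut⟩ hpath
end
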